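/- arXiv:1412.2206 — 7 statements merged into one kernel-verified Lean document; each statement's English description precedes it below -/
import Mathlib

section
/- For every x∈ℝ^K, w^+(x) = sup_{p∈Δ(K)} ( v^+(p) − ⟨p,x⟩ ), i.e. w^+ = (v^+)^♯; and for every p∈Δ(K), v^+(p) = inf_{x∈ℝ^K} ( w^+(x) + ⟨x,p⟩ ), i.e. v^+ = (w^+)^♭ on Δ(K). -/
open scoped BigOperators

set_option maxHeartbeats 1000000

/-- conjugacy between the minmax `v⁺` of the primal game and the
minmax `w⁺` of the dual game: `w⁺ = (v⁺)♯` (sup over the simplex, since `v⁺` is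
extended by `−∞` outside it) and `v⁺ = (w⁺)♭` on the simplex. -/
theorem stmt_1
    {K : Type*} [Fintype K] [Nonempty K]
    {V W : Type*} [AddCommGroup V] [Module ℝ V] [AddCommGroup W] [Module ℝ W]
    (S : Set V) (T : Set W) (hS : S.Nonempty) (hT : T.Nonempty)
    (hSconv : Convex ℝ S) (hTconv : Convex ℝ T)
    (G : K → V → W → ℝ)
    (hGaff₁ : ∀ k, ∀ t ∈ T, ∀ s₁ ∈ S, ∀ s₂ ∈ S, ∀ a b : ℝ,
      0 ≤ a → 0 ≤ b → a + b = 1 →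
      G k (a • s₁ + b • s₂) t = a * G k s₁ t + b * G k s₂ t)
    (hGaff₂ : ∀ k, ∀ s ∈ S, ∀ t₁ ∈ T, ∀ t₂ ∈ T, ∀ a b : ℝ,
      0 ≤ a → 0 ≤ b → a + b = 1 →
      G k s (a • t₁ + b • t₂) = a * G k s t₁ + b * G k s t₂)
    (C : ℝ) (hC : ∀ k, ∀ s ∈ S, ∀ t ∈ T, |G k s t| ≤ C)
    (vplus wplus : (K → ℝ) → ℝ)
    (hv : ∀ p : K → ℝ, vplus p =
      ⨅ t : T, ⨆ s : K → S, ∑ k, p k * G k (s k : V) (t : W))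
    (hw : ∀ x : K → ℝ, wplus x =
      ⨅ t : T, ⨆ q : stdSimplex ℝ K, ⨆ s : S,
        ((∑ k, (q : K → ℝ) k * G k (s : V) (t : W)) - ∑ k, (q : K → ℝ) k * x k)) :
    (∀ x : K → ℝ, wplus x =
      ⨆ p : stdSimplex ℝ K, (vplus (p : K → ℝ) - ∑ k, (p : K → ℝ) k * x k)) ∧
    (∀ p ∈ stdSimplex ℝ K,
      vplus p = ⨅ x : K → ℝ, (wplus x + ∑ k, x k * p k)) := by
  classical
  have hSne : Nonempty S := hS.to_subtype
  have hTne : Nonempty T := hT.to_subtype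
  obtain ⟨s₀, hs₀⟩ := hS
  obtain ⟨t₀, ht₀⟩ := hT
  have hC0 : 0 ≤ C := le_trans (abs_nonneg _) (hC (Classical.arbitrary K) s₀ hs₀ t₀ ht₀)
  set ψ : T → K → ℝ := fun t k => ⨆ s : S, G k (s : V) (t : W) with hψdef
  have hGb : ∀ k (s : S) (t : T), |G k (s : V) (t : W)| ≤ C := fun k s t => hC k s s.2 t t.2
  have hbddψ : ∀ k (t : T), BddAbove (Set.range fun s : S => G k (s : V) (t : W)) :=
    fun k t => ⟨C, by rintro _ ⟨s, rfl⟩; exact (abs_le.1 (hGb k s t)).2⟩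
  have hGleψ : ∀ k (s : S) (t : T), G k (s : V) (t : W) ≤ ψ t k :=
    fun k s t => le_ciSup (hbddψ k t) s
  have hψub : ∀ (t : T) k, ψ t k ≤ C := fun t k => ciSup_le fun s => (abs_le.1 (hGb k s t)).2
  have hψlb : ∀ (t : T) k, -C ≤ ψ t k :=
    fun t k => le_trans (abs_le.1 (hGb k ⟨s₀, hs₀⟩ t)).1 (hGleψ k ⟨s₀, hs₀⟩ t)
  -- L1 : inner sup of the primal game
  have L1 : ∀ p ∈ stdSimplex ℝ K, ∀ t : T,
      (⨆ s : K → S, ∑ k, p k * G k (s k : V) (t : W)) = ∑ k, p k * ψ t k := by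
    intro p hp t
    have hble : ∀ s : K → S, (∑ k, p k * G k (s k : V) (t : W)) ≤ ∑ k, p k * ψ t k :=
      fun s => Finset.sum_le_sum fun k _ =>
        mul_le_mul_of_nonneg_left (hGleψ k (s k) t) (hp.1 k)
    have hb : BddAbove (Set.range fun s : K → S => ∑ k, p k * G k (s k : V) (t : W)) :=
      ⟨∑ k, p k * ψ t k, by rintro _ ⟨s, rfl⟩; exact hble s⟩
    refine le_antisymm (ciSup_le hble) (le_of_forall_pos_le_add fun ε hε => ?_)
    have hex : ∀ k, ∃ s : S, ψ t k - ε < G k (s : V) (t : W) := by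
      intro k
      exact exists_lt_of_lt_ciSup (by linarith : ψ t k - ε < ψ t k)
    choose s hs using hex
    calc (∑ k, p k * ψ t k) ≤ ∑ k, p k * (G k (s k : V) (t : W) + ε) := by
          refine Finset.sum_le_sum fun k _ => mul_le_mul_of_nonneg_left ?_ (hp.1 k)
          linarith [hs k]
      _ = (∑ k, p k * G k (s k : V) (t : W)) + (∑ k, p k) * ε := by
          rw [Finset.sum_mul, ← Finset.sum_add_distrib]
          exact Finset.sum_congr rfl fun k _ => by ring
      _ = (∑ k, p k * G k (s k : V) (t : W)) + ε := by rw [hp.2, one_mul]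
      _ ≤ (⨆ s : K → S, ∑ k, p k * G k (s k : V) (t : W)) + ε :=
          add_le_add_left (le_ciSup hb s) ε
  have hvΔ : ∀ p ∈ stdSimplex ℝ K, vplus p = ⨅ t : T, ∑ k, p k * ψ t k := by
    intro p hp; rw [hv p]; exact iInf_congr (L1 p hp)
  -- bound for dual payoff
  set B : (K → ℝ) → ℝ := fun x => C + ∑ k, |x k| with hBdef
  have hqx : ∀ (x : K → ℝ) (q : stdSimplex ℝ K), |∑ k, (q : K → ℝ) k * x k| ≤ ∑ k, |x k| := by
    intro x q
    calc |∑ k, (q : K → ℝ) k * x k| ≤ ∑ k, |(q : K → ℝ) k * x k| := Finset.abs_sum_le_sum_abs _ _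
      _ ≤ ∑ k, |x k| := by
          refine Finset.sum_le_sum fun k _ => ?_
          rw [abs_mul, abs_of_nonneg (by exact q.2.1 k)]
          have hq1 : (q : K → ℝ) k ≤ 1 := by
            rw [← q.2.2]
            exact Finset.single_le_sum (fun j _ => q.2.1 j) (Finset.mem_univ k)
          nlinarith [abs_nonneg (x k)]
  have hqG : ∀ (q : stdSimplex ℝ K) (s : S) (t : T), |∑ k, (q : K → ℝ) k * G k (s : V) (t : W)| ≤ C := by
    intro q s t
    calc |∑ k, (q : K → ℝ) k * G k (s : V) (t : W)| ≤ ∑ k, |(q : K → ℝ) k * G k (s : V) (t : W)| :=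
          Finset.abs_sum_le_sum_abs _ _
      _ ≤ ∑ k, (q : K → ℝ) k * C := by
          refine Finset.sum_le_sum fun k _ => ?_
          rw [abs_mul, abs_of_nonneg (by exact q.2.1 k)]
          exact mul_le_mul_of_nonneg_left (hGb k s t) (q.2.1 k)
      _ = C := by rw [← Finset.sum_mul, (show (∑ i, (q : K → ℝ) i) = 1 from q.2.2), one_mul]
  -- M t = max_k (ψ t k - x k), and wplus x = ⨅ t, M t
  have hMbA : ∀ (x : K → ℝ) (t : T), BddAbove (Set.range fun k => ψ t k - x k) :=
    fun x t => (Set.finite_range _).bddAbove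
  have hMub : ∀ (x : K → ℝ) (t : T) k, ψ t k - x k ≤ ⨆ j, (ψ t j - x j) :=
    fun x t k => le_ciSup (hMbA x t) k
  have hMle : ∀ (x : K → ℝ) (t : T), (⨆ j, (ψ t j - x j)) ≤ B x := by
    intro x t
    refine ciSup_le fun k => ?_
    have h1 : x k ≥ -|x k| := neg_abs_le (x k)
    have h2 : |x k| ≤ ∑ j, |x j| := Finset.single_le_sum (fun j _ => abs_nonneg (x j)) (Finset.mem_univ k)
    have := hψub t k
    simp only [hBdef]
    linarith
  have hMge : ∀ (x : K → ℝ) (t : T), -(B x) ≤ ⨆ j, (ψ t j - x j) := by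
    intro x t
    set k := Classical.arbitrary K
    refine le_trans ?_ (hMub x t k)
    have h2 : |x k| ≤ ∑ j, |x j| := Finset.single_le_sum (fun j _ => abs_nonneg (x j)) (Finset.mem_univ k)
    have h1 : x k ≤ |x k| := le_abs_self (x k)
    have := hψlb t k
    simp only [hBdef]
    linarith
  haveI : Nonempty (stdSimplex ℝ K) :=
    ⟨⟨Pi.single (Classical.arbitrary K) 1, single_mem_stdSimplex ℝ (Classical.arbitrary K)⟩⟩
  have L2 : ∀ (x : K → ℝ) (t : T),
      (⨆ q : stdSimplex ℝ K, ⨆ s : S,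
        ((∑ k, (q : K → ℝ) k * G k (s : V) (t : W)) - ∑ k, (q : K → ℝ) k * x k))
      = ⨆ j, (ψ t j - x j) := by
    intro x t
    have hF : ∀ (q : stdSimplex ℝ K) (s : S),
        ((∑ k, (q : K → ℝ) k * G k (s : V) (t : W)) - ∑ k, (q : K → ℝ) k * x k)
        ≤ ⨆ j, (ψ t j - x j) := by
      intro q s
      have h1 : (∑ k, (q : K → ℝ) k * G k (s : V) (t : W)) - ∑ k, (q : K → ℝ) k * x k
          = ∑ k, (q : K → ℝ) k * (G k (s : V) (t : W) - x k) := by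
        rw [← Finset.sum_sub_distrib]
        exact Finset.sum_congr rfl fun k _ => by ring
      rw [h1]
      calc (∑ k, (q : K → ℝ) k * (G k (s : V) (t : W) - x k))
          ≤ ∑ k, (q : K → ℝ) k * (⨆ j, (ψ t j - x j)) := by
            refine Finset.sum_le_sum fun k _ => mul_le_mul_of_nonneg_left ?_ (q.2.1 k)
            exact le_trans (by linarith [hGleψ k s t] : G k (s : V) (t : W) - x k ≤ ψ t k - x k) (hMub x t k)
        _ = ⨆ j, (ψ t j - x j) := by rw [← Finset.sum_mul, (show (∑ i, (q : K → ℝ) i) = 1 from q.2.2), one_mul]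
    have hbin : ∀ q : stdSimplex ℝ K, BddAbove (Set.range fun s : S =>
        ((∑ k, (q : K → ℝ) k * G k (s : V) (t : W)) - ∑ k, (q : K → ℝ) k * x k)) :=
      fun q => ⟨⨆ j, (ψ t j - x j), by rintro _ ⟨s, rfl⟩; exact hF q s⟩
    have hbout : BddAbove (Set.range fun q : stdSimplex ℝ K => ⨆ s : S,
        ((∑ k, (q : K → ℝ) k * G k (s : V) (t : W)) - ∑ k, (q : K → ℝ) k * x k)) :=
      ⟨⨆ j, (ψ t j - x j), by rintro _ ⟨q, rfl⟩; exact ciSup_le (hF q)⟩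
    refine le_antisymm (ciSup_le fun q => ciSup_le (hF q)) ?_
    obtain ⟨k₀, hk₀⟩ := Finite.exists_max fun k => ψ t k - x k
    have hMt : (⨆ j, (ψ t j - x j)) = ψ t k₀ - x k₀ := le_antisymm (ciSup_le hk₀) (hMub x t k₀)
    refine le_of_forall_pos_le_add fun ε hε => ?_
    obtain ⟨s, hs⟩ : ∃ s : S, ψ t k₀ - ε < G k₀ (s : V) (t : W) :=
      exists_lt_of_lt_ciSup (by linarith : ψ t k₀ - ε < ψ t k₀)
    have hqmem : (Pi.single k₀ 1 : K → ℝ) ∈ stdSimplex ℝ K := single_mem_stdSimplex ℝ k₀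
    set q : stdSimplex ℝ K := ⟨Pi.single k₀ 1, hqmem⟩ with hq
    have hval1 : (∑ k, (q : K → ℝ) k * G k (s : V) (t : W)) = G k₀ (s : V) (t : W) := by
      rw [Finset.sum_eq_single k₀]
      · simp [hq]
      · intro b _ hb; simp [hq, Pi.single_apply, hb]
      · intro h; exact absurd (Finset.mem_univ k₀) h
    have hval2 : (∑ k, (q : K → ℝ) k * x k) = x k₀ := by
      rw [Finset.sum_eq_single k₀]
      · simp [hq]
      · intro b _ hb; simp [hq, Pi.single_apply, hb]
      · intro h; exact absurd (Finset.mem_univ k₀) h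
    have step : ψ t k₀ - x k₀ - ε ≤
        ((∑ k, (q : K → ℝ) k * G k (s : V) (t : W)) - ∑ k, (q : K → ℝ) k * x k) := by
      rw [hval1, hval2]; linarith
    calc (⨆ j, (ψ t j - x j)) = ψ t k₀ - x k₀ := hMt
      _ ≤ ((∑ k, (q : K → ℝ) k * G k (s : V) (t : W)) - ∑ k, (q : K → ℝ) k * x k) + ε := by linarith
      _ ≤ (⨆ s : S, ((∑ k, (q : K → ℝ) k * G k (s : V) (t : W)) - ∑ k, (q : K → ℝ) k * x k)) + ε :=
          add_le_add_left (le_ciSup (hbin q) s) ε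
      _ ≤ (⨆ q : stdSimplex ℝ K, ⨆ s : S,
            ((∑ k, (q : K → ℝ) k * G k (s : V) (t : W)) - ∑ k, (q : K → ℝ) k * x k)) + ε :=
          add_le_add_left (le_ciSup hbout q) ε
  have hwM : ∀ x : K → ℝ, wplus x = ⨅ t : T, ⨆ j, (ψ t j - x j) := by
    intro x; rw [hw x]; exact iInf_congr (L2 x)
  have hvbdd : ∀ p ∈ stdSimplex ℝ K, BddBelow (Set.range fun t : T => ∑ k, p k * ψ t k) := by
    intro p hp
    refine ⟨-C, ?_⟩
    rintro _ ⟨t, rfl⟩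
    calc -C = ∑ k, p k * (-C) := by rw [← Finset.sum_mul, hp.2, one_mul]
      _ ≤ ∑ k, p k * ψ t k :=
        Finset.sum_le_sum fun k _ => mul_le_mul_of_nonneg_left (hψlb t k) (hp.1 k)
  -- direction (a): each candidate value is ≤ wplus x
  have dirA : ∀ (x : K → ℝ), ∀ p ∈ stdSimplex ℝ K,
      vplus p - ∑ k, p k * x k ≤ wplus x := by
    intro x p hp
    rw [hwM x]
    refine le_ciInf fun t => ?_
    have h1 : vplus p ≤ ∑ k, p k * ψ t k := by
      rw [hvΔ p hp]; exact ciInf_le (hvbdd p hp) t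
    have h2 : (∑ k, p k * ψ t k) - ∑ k, p k * x k ≤ ⨆ j, (ψ t j - x j) := by
      have : (∑ k, p k * ψ t k) - ∑ k, p k * x k = ∑ k, p k * (ψ t k - x k) := by
        rw [← Finset.sum_sub_distrib]; exact Finset.sum_congr rfl fun k _ => by ring
      rw [this]
      calc (∑ k, p k * (ψ t k - x k)) ≤ ∑ k, p k * (⨆ j, (ψ t j - x j)) :=
            Finset.sum_le_sum fun k _ => mul_le_mul_of_nonneg_left (hMub x t k) (hp.1 k)
        _ = ⨆ j, (ψ t j - x j) := by rw [← Finset.sum_mul, hp.2, one_mul]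
    linarith
  have hbddMg : ∀ x' : K → ℝ, BddBelow (Set.range fun t : T => ⨆ j, (ψ t j - x' j)) :=
    fun x' => ⟨-(B x'), by rintro _ ⟨t, rfl⟩; exact hMge x' t⟩
  -- direction (b): there is a p achieving wplus x
  have dirB : ∀ x : K → ℝ, ∃ p ∈ stdSimplex ℝ K,
      wplus x ≤ vplus p - ∑ k, p k * x k := by
    intro x
    set c : ℝ := wplus x with hc
    set A : Set (K → ℝ) := {y | ∃ t : T, ∀ k, ψ t k - x k < y k} with hA
    have hAopen : IsOpen A := by
      have : A = ⋃ t : T, ⋂ k, {y : K → ℝ | ψ t k - x k < y k} := by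
        ext y; simp [hA, Set.mem_iUnion, Set.mem_iInter]
      rw [this]
      exact isOpen_iUnion fun t => isOpen_iInter_of_finite fun k =>
        isOpen_lt continuous_const (continuous_apply k)
    have hAconv : Convex ℝ A := by
      rintro y₁ ⟨u₁, h₁⟩ y₂ ⟨u₂, h₂⟩ a b ha hb hab
      refine ⟨⟨a • (u₁ : W) + b • (u₂ : W), hTconv u₁.2 u₂.2 ha hb hab⟩, fun k => ?_⟩
      have hψc : ψ ⟨a • (u₁ : W) + b • (u₂ : W), hTconv u₁.2 u₂.2 ha hb hab⟩ k
          ≤ a * ψ u₁ k + b * ψ u₂ k := by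
        refine ciSup_le fun s => ?_
        rw [hGaff₂ k s s.2 u₁ u₁.2 u₂ u₂.2 a b ha hb hab]
        exact add_le_add (mul_le_mul_of_nonneg_left (hGleψ k s u₁) ha)
          (mul_le_mul_of_nonneg_left (hGleψ k s u₂) hb)
      have hpos : 0 < a ∨ 0 < b := by
        by_contra h; push_neg at h; nlinarith [h.1, h.2]
      have hstrict : a * (ψ u₁ k - x k) + b * (ψ u₂ k - x k) < a * y₁ k + b * y₂ k := by
        rcases hpos with h | h
        · have l1 := mul_lt_mul_of_pos_left (h₁ k) h
          have l2 := mul_le_mul_of_nonneg_left (le_of_lt (h₂ k)) hb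
          linarith
        · have l1 := mul_le_mul_of_nonneg_left (le_of_lt (h₁ k)) ha
          have l2 := mul_lt_mul_of_pos_left (h₂ k) h
          linarith
      have hxk : a * x k + b * x k = x k := by rw [← add_mul, hab, one_mul]
      have : (a • y₁ + b • y₂) k = a * y₁ k + b * y₂ k := rfl
      rw [this]
      linarith
    have hbddM : ∀ x' : K → ℝ, BddBelow (Set.range fun t : T => ⨆ j, (ψ t j - x' j)) :=
      fun x' => ⟨-(B x'), by rintro _ ⟨t, rfl⟩; exact hMge x' t⟩
    have hcA : (fun _ : K => c) ∉ A := by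
      rintro ⟨t, ht⟩
      obtain ⟨k₀, hk₀⟩ := Finite.exists_max fun k => ψ t k - x k
      have hMt : (⨆ j, (ψ t j - x j)) = ψ t k₀ - x k₀ := le_antisymm (ciSup_le hk₀) (hMub x t k₀)
      have h1 : c ≤ ⨆ j, (ψ t j - x j) := by
        rw [hc, hwM x]; exact ciInf_le (hbddM x) t
      have h2 := ht k₀
      rw [hMt] at h1
      linarith
    obtain ⟨f, hf⟩ := geometric_hahn_banach_open_point hAconv hAopen hcA
    set lam : K → ℝ := fun k => f (Pi.single k 1) with hlam
    have hfy : ∀ y : K → ℝ, f y = ∑ k, y k * lam k := by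
      intro y
      have h1 : y = ∑ k, Pi.single k (y k) := (Finset.univ_sum_single y).symm
      have h2 : ∀ k, Pi.single k (y k) = (y k) • (Pi.single k 1 : K → ℝ) := by
        intro k
        rw [← Pi.single_smul, smul_eq_mul, mul_one]
      calc f y = f (∑ k, Pi.single k (y k)) := by rw [← h1]
        _ = ∑ k, f (Pi.single k (y k)) := map_sum f _ _
        _ = ∑ k, y k * lam k := by
            refine Finset.sum_congr rfl fun k _ => ?_
            rw [h2 k, map_smul, smul_eq_mul, hlam]
    set tt : T := ⟨t₀, ht₀⟩ with htt
    set y₀ : K → ℝ := fun k => ψ tt k - x k + 1 with hy₀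
    have hy₀A : y₀ ∈ A := ⟨tt, fun k => by simp [hy₀]⟩
    have hfy₀ : f y₀ < f (fun _ => c) := hf y₀ hy₀A
    have hlam_np : ∀ k, lam k ≤ 0 := by
      intro k
      by_contra h
      push_neg at h
      set r : ℝ := (f (fun _ => c) - f y₀) / lam k with hr
      have hrpos : 0 < r := div_pos (by linarith) h
      have hmem : y₀ + r • (Pi.single k 1 : K → ℝ) ∈ A := by
        refine ⟨tt, fun j => ?_⟩
        have heval : (y₀ + r • (Pi.single k 1 : K → ℝ)) j = y₀ j + r * (Pi.single k 1 : K → ℝ) j := rfl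
        rw [heval]
        have hsnn : 0 ≤ (Pi.single k 1 : K → ℝ) j := by
          rcases eq_or_ne k j with rfl | hkj
          · simp
          · simp [Pi.single_apply, hkj]
        have : ψ tt j - x j < y₀ j := by simp [hy₀]
        nlinarith [hsnn, hrpos.le]
      have hlt : f y₀ + r * lam k < f (fun _ => c) := by
        have h' := hf _ hmem
        rw [map_add, map_smul, smul_eq_mul] at h'
        exact h'
      have hrl : r * lam k = f (fun _ => c) - f y₀ := by
        rw [hr]
        field_simp
      linarith
    have hslam : ∑ k, lam k < 0 := by
      rcases lt_or_eq_of_le (Finset.sum_nonpos (fun k _ => hlam_np k)) with h | h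
      · exact h
      · exfalso
        have hall : ∀ k ∈ Finset.univ, lam k = 0 :=
          (Finset.sum_eq_zero_iff_of_nonpos (fun k _ => hlam_np k)).1 h
        have : f y₀ = 0 := by
          rw [hfy]; exact Finset.sum_eq_zero fun k _ => by rw [hall k (Finset.mem_univ k), mul_zero]
        have hfc : f (fun _ => c) = 0 := by
          rw [hfy]; exact Finset.sum_eq_zero fun k _ => by rw [hall k (Finset.mem_univ k), mul_zero]
        rw [this, hfc] at hfy₀
        exact lt_irrefl _ hfy₀
    set s : ℝ := ∑ k, lam k with hsdef
    set p : K → ℝ := fun k => lam k / s with hp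
    have hpΔ : p ∈ stdSimplex ℝ K := by
      constructor
      · intro k
        have h := div_nonneg (neg_nonneg.2 (hlam_np k)) (le_of_lt (neg_pos.2 hslam))
        rwa [neg_div_neg_eq] at h
      · rw [hp]
        simp only
        rw [← Finset.sum_div, ← hsdef, div_self (ne_of_lt hslam)]
    have hkey : ∀ t : T, c ≤ ∑ k, p k * (ψ t k - x k) := by
      intro t
      refine le_of_forall_pos_le_add fun ε hε => ?_
      set g : K → ℝ := fun k => ψ t k - x k with hg
      have hmemA : (fun k => g k + ε) ∈ A := ⟨t, fun k => by simp [hg]; linarith⟩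
      have h1 : f (fun k => g k + ε) < f (fun _ => c) := hf _ hmemA
      rw [hfy, hfy] at h1
      have h2 : (∑ k, (g k + ε) * lam k) = (∑ k, g k * lam k) + ε * s := by
        rw [hsdef, Finset.mul_sum, ← Finset.sum_add_distrib]
        exact Finset.sum_congr rfl fun k _ => by ring
      have h3 : (∑ k, (fun _ : K => c) k * lam k) = c * s := by
        rw [hsdef, Finset.mul_sum]
      rw [h2, h3] at h1
      have hpg : (∑ k, p k * g k) * s = ∑ k, g k * lam k := by
        rw [Finset.sum_mul]
        refine Finset.sum_congr rfl fun k _ => ?_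
        have hs0 : s ≠ 0 := ne_of_lt hslam
        rw [hp]
        field_simp
      nlinarith [h1, hpg, hslam]
    refine ⟨p, hpΔ, ?_⟩
    have hvp : c + ∑ k, p k * x k ≤ vplus p := by
      rw [hvΔ p hpΔ]
      refine le_ciInf fun t => ?_
      have := hkey t
      have hsplit : (∑ k, p k * (ψ t k - x k)) = (∑ k, p k * ψ t k) - ∑ k, p k * x k := by
        rw [← Finset.sum_sub_distrib]; exact Finset.sum_congr rfl fun k _ => by ring
      rw [hsplit] at this
      linarith
    linarith
  constructor
  · intro x
    obtain ⟨p, hpΔ, hple⟩ := dirB x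
    have hbdd : BddAbove (Set.range fun q : stdSimplex ℝ K =>
        vplus (q : K → ℝ) - ∑ k, (q : K → ℝ) k * x k) :=
      ⟨wplus x, by rintro _ ⟨q, rfl⟩; exact dirA x q q.2⟩
    refine le_antisymm ?_ (ciSup_le fun q => dirA x q q.2)
    exact le_trans hple (le_ciSup hbdd ⟨p, hpΔ⟩)
  · intro p hp
    have hlb : ∀ x : K → ℝ, vplus p ≤ wplus x + ∑ k, x k * p k := by
      intro x
      have h1 := dirA x p hp
      have hcomm : (∑ k, x k * p k) = ∑ k, p k * x k :=
        Finset.sum_congr rfl fun k _ => mul_comm _ _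
      linarith [h1, hcomm.le, hcomm.ge]
    have hbb : BddBelow (Set.range fun x : K → ℝ => wplus x + ∑ k, x k * p k) :=
      ⟨vplus p, by rintro _ ⟨x, rfl⟩; exact hlb x⟩
    refine le_antisymm (le_ciInf hlb) (le_of_forall_pos_le_add fun ε hε => ?_)
    have h' : (⨅ t : T, ∑ k, p k * ψ t k) < vplus p + ε := by
      rw [← hvΔ p hp]; linarith
    obtain ⟨t, ht⟩ := exists_lt_of_ciInf_lt h'
    set xx : K → ℝ := fun k => ψ t k with hxx
    have hx0 : (⨆ j, (ψ t j - xx j)) = (0 : ℝ) := by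
      simp [hxx, ciSup_const]
    have hw0 : wplus xx ≤ 0 := by
      rw [hwM xx]
      exact le_trans (ciInf_le (hbddMg xx) t) (le_of_eq hx0)
    have hxc : (∑ k, xx k * p k) = ∑ k, p k * ψ t k :=
      Finset.sum_congr rfl fun k _ => mul_comm _ _
    refine le_trans (ciInf_le hbb xx) ?_
    linarith [hw0, ht, hxc.le, hxc.ge]
end

section
/- Let p∈Δ(K), let x∈∂^+v^+(p) (a supergradient of the minmax v^+ at p, where v^+ is extended by −∞ outside Δ(K)), let ε≥0, and let t_ε∈T be ε-optimal for player 2 in the dual game 𝒟[𝒢](x), i.e. sup_{(q,s)∈Δ(K)×S} h[x](q,s,t_ε) ≤ w^+(x) + ε. Then t_ε is ε-optimal for player 2 in the primal game 𝒢(p), i.e. sup_{ŝ∈S^K} γ(p,ŝ,t_ε) ≤ v^+(p) + ε. -/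
open scoped BigOperators

/-- if `x` is a supergradient of `v⁺` at `p ∈ Δ(K)` (with `v⁺`
extended by `−∞` outside `Δ(K)`, so the supergradient property need only be
tested on `Δ(K)`), then any `ε`-optimal strategy `tε` of player 2 in the dual
game `𝒟[𝒢](x)` is `ε`-optimal for player 2 in the primal game `𝒢(p)`. -/
theorem stmt_3
    {K : Type*} [Fintype K] [Nonempty K]
    {V W : Type*} [AddCommGroup V] [Module ℝ V] [AddCommGroup W] [Module ℝ W]
    (S : Set V) (T : Set W) (hS : S.Nonempty) (hT : T.Nonempty)
    (hSconv : Convex ℝ S) (hTconv : Convex ℝ T)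
    (G : K → V → W → ℝ)
    (hGaff₁ : ∀ k, ∀ t ∈ T, ∀ s₁ ∈ S, ∀ s₂ ∈ S, ∀ a b : ℝ,
      0 ≤ a → 0 ≤ b → a + b = 1 →
      G k (a • s₁ + b • s₂) t = a * G k s₁ t + b * G k s₂ t)
    (hGaff₂ : ∀ k, ∀ s ∈ S, ∀ t₁ ∈ T, ∀ t₂ ∈ T, ∀ a b : ℝ,
      0 ≤ a → 0 ≤ b → a + b = 1 →
      G k s (a • t₁ + b • t₂) = a * G k s t₁ + b * G k s t₂)
    (C : ℝ) (hC : ∀ k, ∀ s ∈ S, ∀ t ∈ T, |G k s t| ≤ C)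
    (vplus wplus : (K → ℝ) → ℝ)
    (hv : ∀ p : K → ℝ, vplus p =
      ⨅ t : T, ⨆ s : K → S, ∑ k, p k * G k (s k : V) (t : W))
    (hw : ∀ x : K → ℝ, wplus x =
      ⨅ t : T, ⨆ q : stdSimplex ℝ K, ⨆ s : S,
        ((∑ k, (q : K → ℝ) k * G k (s : V) (t : W)) - ∑ k, (q : K → ℝ) k * x k))
    (p : K → ℝ) (hp : p ∈ stdSimplex ℝ K)
    (x : K → ℝ)
    (hx : ∀ p' ∈ stdSimplex ℝ K,
      vplus p' ≤ vplus p + ∑ k, x k * (p' k - p k))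
    (ε : ℝ) (hε : 0 ≤ ε)
    (tε : T)
    (htε : (⨆ q : stdSimplex ℝ K, ⨆ s : S,
        ((∑ k, (q : K → ℝ) k * G k (s : V) (tε : W)) -
          ∑ k, (q : K → ℝ) k * x k)) ≤ wplus x + ε) :
    (⨆ s : K → S, ∑ k, p k * G k (s k : V) (tε : W)) ≤ vplus p + ε := by
  classical
  obtain ⟨s₀, hs₀⟩ := hS
  obtain ⟨t₀, ht₀⟩ := hT
  haveI : Nonempty S := ⟨⟨s₀, hs₀⟩⟩
  haveI : Nonempty T := ⟨⟨t₀, ht₀⟩⟩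
  haveI : Nonempty (K → S) := ⟨fun _ => ⟨s₀, hs₀⟩⟩
  haveI : Nonempty (stdSimplex ℝ K) := ⟨⟨p, hp⟩⟩
  -- bounds on G
  have hGle : ∀ (k : K) (s : S) (t : T), G k (s : V) (t : W) ≤ C :=
    fun k s t => (abs_le.mp (hC k s s.2 t t.2)).2
  have hGge : ∀ (k : K) (s : S) (t : T), -C ≤ G k (s : V) (t : W) :=
    fun k s t => (abs_le.mp (hC k s s.2 t t.2)).1
  -- the per-state value σ
  set σ : K → T → ℝ := fun k t => ⨆ s : S, G k (s : V) (t : W) with hσdef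
  have hσ_le : ∀ (k : K) (t : T), σ k t ≤ C := fun k t => ciSup_le fun s => hGle k s t
  have hGσ : ∀ (k : K) (t : T) (s : S), G k (s : V) (t : W) ≤ σ k t :=
    fun k t s => le_ciSup ⟨C, by rintro _ ⟨s', rfl⟩; exact hGle k s' t⟩ s
  have hσ_ge : ∀ (k : K) (t : T), -C ≤ σ k t :=
    fun k t => le_trans (hGge k ⟨s₀, hs₀⟩ t) (hGσ k t ⟨s₀, hs₀⟩)
  set X : ℝ := ∑ k, |x k| with hXdef
  have hxX : ∀ k, |x k| ≤ X := fun k =>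
    Finset.single_le_sum (f := fun k => |x k|) (fun j _ => abs_nonneg _) (Finset.mem_univ k)
  -- simplex facts
  have hq_le_one : ∀ (q : stdSimplex ℝ K) (k : K), (q : K → ℝ) k ≤ 1 := by
    intro q k
    have h := Finset.single_le_sum (f := (q : K → ℝ)) (fun j _ => q.2.1 j) (Finset.mem_univ k)
    rw [stdSimplex.sum_eq_one q] at h
    exact h
  have habs : ∀ (q : stdSimplex ℝ K), |∑ k, (q : K → ℝ) k * x k| ≤ X := by
    intro q
    calc |∑ k, (q : K → ℝ) k * x k| ≤ ∑ k, |(q : K → ℝ) k * x k| :=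
          Finset.abs_sum_le_sum_abs _ _
      _ ≤ ∑ k, |x k| := by
          refine Finset.sum_le_sum fun k _ => ?_
          rw [abs_mul, abs_of_nonneg (stdSimplex.zero_le q k)]
          exact mul_le_of_le_one_left (abs_nonneg _) (hq_le_one q k)
  have hqG : ∀ (q : stdSimplex ℝ K) (s : S) (t : T),
      ∑ k, (q : K → ℝ) k * G k (s : V) (t : W) ≤ C := by
    intro q s t
    calc ∑ k, (q : K → ℝ) k * G k (s : V) (t : W) ≤ ∑ k, (q : K → ℝ) k * C :=
          Finset.sum_le_sum fun k _ => mul_le_mul_of_nonneg_left (hGle k s t) (q.2.1 k)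
      _ = C := by rw [← Finset.sum_mul, stdSimplex.sum_eq_one q, one_mul]
  -- the dual sup D
  set D : T → ℝ := fun t => ⨆ q : stdSimplex ℝ K, ⨆ s : S,
      ((∑ k, (q : K → ℝ) k * G k (s : V) (t : W)) - ∑ k, (q : K → ℝ) k * x k) with hDdef
  have hInner_le : ∀ (t : T) (q : stdSimplex ℝ K) (s : S),
      (∑ k, (q : K → ℝ) k * G k (s : V) (t : W)) - ∑ k, (q : K → ℝ) k * x k ≤ C + X := by
    intro t q s
    have h1 := hqG q s t
    have h2 := (abs_le.mp (habs q)).1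
    linarith
  have hbddInner : ∀ (t : T) (q : stdSimplex ℝ K),
      BddAbove (Set.range fun s : S =>
        (∑ k, (q : K → ℝ) k * G k (s : V) (t : W)) - ∑ k, (q : K → ℝ) k * x k) :=
    fun t q => ⟨C + X, by rintro _ ⟨s, rfl⟩; exact hInner_le t q s⟩
  have hbddOuter : ∀ t : T, BddAbove (Set.range fun q : stdSimplex ℝ K => ⨆ s : S,
      ((∑ k, (q : K → ℝ) k * G k (s : V) (t : W)) - ∑ k, (q : K → ℝ) k * x k)) :=
    fun t => ⟨C + X, by rintro _ ⟨q, rfl⟩; exact ciSup_le fun s => hInner_le t q s⟩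
  -- unit vectors in the simplex
  have hunit : ∀ k : K, (fun j => if j = k then (1:ℝ) else 0) ∈ stdSimplex ℝ K := by
    intro k
    constructor
    · intro j; dsimp only; split <;> norm_num
    · simp
  have hD_ge : ∀ (t : T) (k : K), σ k t - x k ≤ D t := by
    intro t k
    rw [sub_le_iff_le_add]
    refine ciSup_le fun s => ?_
    rw [← sub_le_iff_le_add]
    set e : stdSimplex ℝ K := ⟨fun j => if j = k then (1:ℝ) else 0, hunit k⟩ with hedef
    have he1 : G k (s : V) (t : W) - x k
        = (∑ j, (e : K → ℝ) j * G j (s : V) (t : W)) - ∑ j, (e : K → ℝ) j * x j := by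
      show _ = (∑ j, (fun j => if j = k then (1:ℝ) else 0) j * G j (s : V) (t : W)) - ∑ j, (fun j => if j = k then (1:ℝ) else 0) j * x j
      simp [hedef, ite_mul]
    rw [he1]
    exact le_trans (le_ciSup (hbddInner t e) s) (le_ciSup (hbddOuter t) e)
  have hD_lb : ∀ t : T, -C - X ≤ D t := by
    intro t
    obtain ⟨k₀⟩ := (inferInstance : Nonempty K)
    have h1 := hD_ge t k₀
    have h2 := hσ_ge k₀ t
    have h3 := (abs_le.mp (hxX k₀)).2
    linarith
  have hw_le_D : ∀ t : T, wplus x ≤ D t := by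
    intro t
    rw [hw x]
    exact ciInf_le ⟨-C - X, by rintro _ ⟨t', rfl⟩; exact hD_lb t'⟩ t
  -- KEY STEP : wplus x ≤ vplus p - ⟨p,x⟩ (uses separation)
  have key : wplus x ≤ vplus p - ∑ k, p k * x k := by
    by_contra hcon
    push_neg at hcon
    set c : ℝ := vplus p - ∑ k, p k * x k with hcdef
    set δ : ℝ := wplus x - c with hδdef
    have hδpos : 0 < δ := by rw [hδdef]; linarith
    set z : K → ℝ := fun k => x k + c + δ/2 with hzdef
    set O : Set (K → ℝ) := {y | ∃ t : T, ∀ k, σ k t < y k} with hOdef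
    have hOopen : IsOpen O := by
      have hO : O = ⋃ t : T, ⋂ k, {y : K → ℝ | σ k t < y k} := by
        ext y; simp [hOdef, Set.mem_iUnion, Set.mem_iInter]
      rw [hO]
      exact isOpen_iUnion fun t => isOpen_iInter_of_finite fun k =>
        isOpen_lt continuous_const (continuous_apply k)
    have hOconv : Convex ℝ O := by
      rintro y₁ ⟨t₁, h₁⟩ y₂ ⟨t₂, h₂⟩ a b ha hb hab
      have htm : (a • (t₁ : W) + b • (t₂ : W)) ∈ T := hTconv t₁.2 t₂.2 ha hb hab
      refine ⟨⟨_, htm⟩, fun k => ?_⟩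
      have hσconv : σ k ⟨_, htm⟩ ≤ a * σ k t₁ + b * σ k t₂ := by
        refine ciSup_le fun s => ?_
        rw [show ((⟨a • (t₁ : W) + b • (t₂ : W), htm⟩ : T) : W)
            = a • (t₁ : W) + b • (t₂ : W) from rfl]
        rw [hGaff₂ k s s.2 t₁ t₁.2 t₂ t₂.2 a b ha hb hab]
        exact add_le_add (mul_le_mul_of_nonneg_left (hGσ k t₁ s) ha)
          (mul_le_mul_of_nonneg_left (hGσ k t₂ s) hb)
      have hy : (a • y₁ + b • y₂) k = a * y₁ k + b * y₂ k := by
        simp [Pi.add_apply, Pi.smul_apply, smul_eq_mul]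
      rw [hy]
      have e1 : a * σ k t₁ ≤ a * y₁ k := mul_le_mul_of_nonneg_left (h₁ k).le ha
      have e2 : b * σ k t₂ ≤ b * y₂ k := mul_le_mul_of_nonneg_left (h₂ k).le hb
      have hstrict : a * σ k t₁ + b * σ k t₂ < a * y₁ k + b * y₂ k := by
        rcases lt_or_eq_of_le ha with ha' | ha'
        · have := mul_lt_mul_of_pos_left (h₁ k) ha'
          linarith
        · have hb1 : (0:ℝ) < b := by rw [← ha'] at hab; linarith
          have := mul_lt_mul_of_pos_left (h₂ k) hb1
          linarith
      linarith
    have hzO : z ∉ O := by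
      rintro ⟨t, ht⟩
      have hDt : D t ≤ c + δ/2 := by
        refine ciSup_le fun q => ciSup_le fun s => ?_
        have hzk : ∀ k, σ k t < x k + c + δ/2 := by
          intro k
          have h := ht k
          rw [hzdef] at h
          exact h
        have hsum : (∑ k, (q : K → ℝ) k * G k (s : V) (t : W)) - ∑ k, (q : K → ℝ) k * x k
            ≤ ∑ k, (q : K → ℝ) k * (c + δ/2) := by
          rw [← Finset.sum_sub_distrib]
          refine Finset.sum_le_sum fun k _ => ?_
          have h1 : G k (s : V) (t : W) ≤ σ k t := hGσ k t s
          have h2 := hzk k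
          have h3 := q.2.1 k
          have h4 : (q : K → ℝ) k * G k (s : V) (t : W) - (q : K → ℝ) k * x k
              = (q : K → ℝ) k * (G k (s : V) (t : W) - x k) := by ring
          rw [h4]
          exact mul_le_mul_of_nonneg_left (by linarith) h3
        calc (∑ k, (q : K → ℝ) k * G k (s : V) (t : W)) - ∑ k, (q : K → ℝ) k * x k
            ≤ ∑ k, (q : K → ℝ) k * (c + δ/2) := hsum
          _ = c + δ/2 := by rw [← Finset.sum_mul, stdSimplex.sum_eq_one q, one_mul]
      have h1 := hw_le_D t
      have h2 : wplus x = c + δ := by rw [hδdef]; ring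
      linarith
    obtain ⟨f, hf⟩ := geometric_hahn_banach_open_point hOconv hOopen hzO
    set lam : K → ℝ := fun k => f (fun j => if k = j then (1:ℝ) else 0) with hlamdef
    have hfy : ∀ y : K → ℝ, f y = ∑ k, y k * lam k := by
      intro y
      conv_lhs => rw [pi_eq_sum_univ y, map_sum]
      refine Finset.sum_congr rfl fun k _ => ?_
      rw [f.map_smul, smul_eq_mul, hlamdef]
    have hy0 : (fun _ : K => C + 1) ∈ O :=
      ⟨⟨t₀, ht₀⟩, fun k => lt_of_le_of_lt (hσ_le k _) (lt_add_one C)⟩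
    have hfz0 : f (fun _ : K => C + 1) < f z := hf _ hy0
    have hlam_np : ∀ k, lam k ≤ 0 := by
      intro k
      by_contra hk
      push_neg at hk
      set M : ℝ := (f z - f (fun _ : K => C + 1)) / lam k with hMdef
      have hM : 0 ≤ M := le_of_lt (div_pos (by linarith) hk)
      have hyM : (fun j => (C + 1) + (if k = j then M else 0)) ∈ O := by
        refine ⟨⟨t₀, ht₀⟩, fun j => ?_⟩
        have hs := hσ_le j ⟨t₀, ht₀⟩
        dsimp only
        split <;> linarith
      have hfyM : f (fun j => (C + 1) + (if k = j then M else 0))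
          = f (fun _ : K => C + 1) + M * lam k := by
        rw [hfy, hfy]
        have hterm : ∀ j, ((C + 1) + (if k = j then M else 0)) * lam j
            = (C + 1) * lam j + (if k = j then M * lam j else 0) := by
          intro j; split <;> ring
        rw [Finset.sum_congr rfl (fun j _ => hterm j), Finset.sum_add_distrib,
          Finset.sum_ite_eq]
        simp
      have hlt := hf _ hyM
      rw [hfyM, hMdef, div_mul_cancel₀ _ (ne_of_gt hk)] at hlt
      linarith
    have hsum_np : ∑ k, lam k ≤ 0 := Finset.sum_nonpos fun k _ => hlam_np k
    have hsum_neg : ∑ k, lam k < 0 := by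
      rcases lt_or_eq_of_le hsum_np with h | h
      · exact h
      · exfalso
        have hall := (Finset.sum_eq_zero_iff_of_nonpos (fun k _ => hlam_np k)).mp h
        have h1 : f (fun _ : K => C + 1) = 0 := by
          rw [hfy]
          exact Finset.sum_eq_zero fun k _ => by rw [hall k (Finset.mem_univ k), mul_zero]
        have h2 : f z = 0 := by
          rw [hfy]
          exact Finset.sum_eq_zero fun k _ => by rw [hall k (Finset.mem_univ k), mul_zero]
        rw [h1, h2] at hfz0
        exact lt_irrefl 0 hfz0
    set qv : K → ℝ := fun k => lam k / (∑ j, lam j) with hqvdef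
    have hqv : qv ∈ stdSimplex ℝ K := by
      constructor
      · intro k
        rw [hqvdef]
        exact div_nonneg_of_nonpos (hlam_np k) hsum_neg.le
      · rw [hqvdef, ← Finset.sum_div, div_self (ne_of_lt hsum_neg)]
    have hlq : ∀ k, lam k = qv k * (∑ j, lam j) := by
      intro k
      rw [hqvdef]
      dsimp only
      rw [div_mul_cancel₀ _ (ne_of_lt hsum_neg)]
    have hmul : ∀ y : K → ℝ, ∑ k, y k * lam k = (∑ k, qv k * y k) * (∑ j, lam j) := by
      intro y
      rw [Finset.sum_mul]
      refine Finset.sum_congr rfl fun k _ => ?_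
      rw [hlq k]; ring
    -- for every t, ⟨qv, z⟩ ≤ ⟨qv, σ(t)⟩
    have hqz_le : ∀ t : T, ∑ k, qv k * z k ≤ ∑ k, qv k * σ k t := by
      intro t
      have hstep : ∀ η : ℝ, 0 < η → ∑ k, qv k * z k ≤ (∑ k, qv k * σ k t) + η := by
        intro η hη
        have hyO : (fun k => σ k t + η) ∈ O := ⟨t, fun k => lt_add_of_pos_right _ hη⟩
        have h := hf _ hyO
        rw [hfy, hfy] at h
        have h1 := hmul (fun k => σ k t + η)
        have h2 := hmul z
        have h3 : ∑ k, qv k * (σ k t + η) = (∑ k, qv k * σ k t) + η := by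
          have hterm : ∀ k, qv k * (σ k t + η) = qv k * σ k t + qv k * η := fun k => by ring
          rw [Finset.sum_congr rfl (fun k _ => hterm k), Finset.sum_add_distrib,
            ← Finset.sum_mul, hqv.2, one_mul]
        rw [h1, h2, h3] at h
        by_contra hc
        push_neg at hc
        have hc' : (∑ k, qv k * σ k t) + η ≤ ∑ k, qv k * z k := by linarith
        have := mul_le_mul_of_nonpos_right hc' hsum_neg.le
        linarith
      by_contra hc
      push_neg at hc
      have := hstep ((∑ k, qv k * z k - ∑ k, qv k * σ k t)/2) (by linarith)
      linarith
    -- vplus qv ≥ ⟨qv, z⟩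
    have hvq : ∑ k, qv k * z k ≤ vplus qv := by
      rw [hv qv]
      refine le_ciInf fun t => ?_
      refine le_trans (hqz_le t) ?_
      have hbddS : BddAbove (Set.range fun sh : K → S =>
          ∑ k, qv k * G k ((sh k : V)) (t : W)) := by
        refine ⟨C, ?_⟩
        rintro _ ⟨sh, rfl⟩
        calc ∑ k, qv k * G k ((sh k : V)) (t : W) ≤ ∑ k, qv k * C :=
              Finset.sum_le_sum fun k _ => mul_le_mul_of_nonneg_left (hGle k (sh k) t) (hqv.1 k)
          _ = C := by rw [← Finset.sum_mul, hqv.2, one_mul]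
      by_contra hc
      push_neg at hc
      set η : ℝ := (∑ k, qv k * σ k t
          - (⨆ sh : K → S, ∑ k, qv k * G k ((sh k : V)) (t : W))) with hηdef
      have hηpos : 0 < η := by rw [hηdef]; linarith
      have hch : ∀ k : K, ∃ s : S, σ k t - η/2 < G k (s : V) (t : W) := by
        intro k
        exact exists_lt_of_lt_ciSup (show σ k t - η/2 < σ k t by linarith)
      choose sh hsh using hch
      have hsumle : ∑ k, qv k * σ k t ≤ (∑ k, qv k * G k ((sh k : V)) (t : W)) + η/2 := by
        have hterm : ∀ k, qv k * σ k t ≤ qv k * G k ((sh k : V)) (t : W) + qv k * (η/2) := by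
          intro k
          have h1 := (hsh k).le
          have h2 := hqv.1 k
          nlinarith
        calc ∑ k, qv k * σ k t
            ≤ ∑ k, (qv k * G k ((sh k : V)) (t : W) + qv k * (η/2)) :=
              Finset.sum_le_sum fun k _ => hterm k
          _ = (∑ k, qv k * G k ((sh k : V)) (t : W)) + (∑ k, qv k) * (η/2) := by
              rw [Finset.sum_add_distrib, Finset.sum_mul]
          _ = (∑ k, qv k * G k ((sh k : V)) (t : W)) + η/2 := by rw [hqv.2, one_mul]
      have hle := le_ciSup hbddS sh
      rw [hηdef] at hηpos
      linarith
    -- contradiction with supergradient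
    have h1 := hx qv hqv
    have h2 : ∑ k, qv k * z k = (∑ k, qv k * x k) + (c + δ/2) := by
      have hterm : ∀ k, qv k * z k = qv k * x k + qv k * (c + δ/2) := by
        intro k; rw [hzdef]; ring
      rw [Finset.sum_congr rfl (fun k _ => hterm k), Finset.sum_add_distrib,
        ← Finset.sum_mul, hqv.2, one_mul]
    have h3 : ∑ k, x k * (qv k - p k) = (∑ k, qv k * x k) - ∑ k, p k * x k := by
      rw [← Finset.sum_sub_distrib]
      exact Finset.sum_congr rfl fun k _ => by ring
    rw [h2] at hvq
    rw [h3] at h1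
    linarith [hcdef.le, hcdef.ge]
  -- final chain
  have hfin1 : (⨆ s : K → S, ∑ k, p k * G k ((s k : V)) (tε : W)) ≤ ∑ k, p k * σ k tε :=
    ciSup_le fun sh => Finset.sum_le_sum fun k _ =>
      mul_le_mul_of_nonneg_left (hGσ k tε (sh k)) (hp.1 k)
  have hfin2 : ∑ k, p k * σ k tε ≤ D tε + ∑ k, p k * x k := by
    have h : ∑ k, p k * σ k tε - ∑ k, p k * x k ≤ D tε := by
      calc ∑ k, p k * σ k tε - ∑ k, p k * x k = ∑ k, p k * (σ k tε - x k) := by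
            rw [← Finset.sum_sub_distrib]
            exact Finset.sum_congr rfl fun k _ => by ring
        _ ≤ ∑ k, p k * D tε :=
            Finset.sum_le_sum fun k _ => mul_le_mul_of_nonneg_left (hD_ge tε k) (hp.1 k)
        _ = D tε := by rw [← Finset.sum_mul, hp.2, one_mul]
    linarith
  have htε' : D tε ≤ wplus x + ε := htε
  linarith
end

section
/- Let π∈Δ(K×L) and let p∈Δ(K), Q∈Δ(L)^K be such that π = p⊗Q. Let x∈∂^+v_Q^+(p) (a supergradient at p of the minmax v_Q^+ of the intermediate game, extended by −∞ outside Δ(K)), let ε≥0, and let t̂_ε∈T^L satisfy sup_{(q,s)∈Δ(K)×S} h_Q[x](q,s,t̂_ε) ≤ w_Q^+(x) + ε. Then t̂_ε is ε-optimal for player 2 in the primal game 𝒢(π): sup_{ŝ∈S^K} γ(π,ŝ,t̂_ε) ≤ v^+(π) + ε. -/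
open scoped BigOperators

/-- let `π = p ⊗ Q`, let `x` be a supergradient at `p` of the
minmax `v_Q⁺` of the intermediate game (extended by `−∞` outside `Δ(K)`, so the
supergradient property need only be tested on `Δ(K)`), and let `tε ∈ T^L` be
`ε`-optimal for player 2 in the dual game `𝒟[𝒢_Q](x)`. Then `tε` is
`ε`-optimal for player 2 in the primal game `𝒢(π)`. -/
theorem stmt_6
    {K L : Type*} [Fintype K] [Nonempty K] [Fintype L] [Nonempty L]
    {V W : Type*} [AddCommGroup V] [Module ℝ V] [AddCommGroup W] [Module ℝ W]
    (S : Set V) (T : Set W) (hS : S.Nonempty) (hT : T.Nonempty)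
    (hSconv : Convex ℝ S) (hTconv : Convex ℝ T)
    (G : K → L → V → W → ℝ)
    (hGaff₁ : ∀ k l, ∀ t ∈ T, ∀ s₁ ∈ S, ∀ s₂ ∈ S, ∀ a b : ℝ,
      0 ≤ a → 0 ≤ b → a + b = 1 →
      G k l (a • s₁ + b • s₂) t = a * G k l s₁ t + b * G k l s₂ t)
    (hGaff₂ : ∀ k l, ∀ s ∈ S, ∀ t₁ ∈ T, ∀ t₂ ∈ T, ∀ a b : ℝ,
      0 ≤ a → 0 ≤ b → a + b = 1 →
      G k l s (a • t₁ + b • t₂) = a * G k l s t₁ + b * G k l s t₂)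
    (C : ℝ) (hC : ∀ k l, ∀ s ∈ S, ∀ t ∈ T, |G k l s t| ≤ C)
    (π : K × L → ℝ) (hπ : π ∈ stdSimplex ℝ (K × L))
    (p : K → ℝ) (hp : p ∈ stdSimplex ℝ K)
    (Q : K → L → ℝ) (hQ : ∀ k, Q k ∈ stdSimplex ℝ L)
    (hπpQ : ∀ k l, π (k, l) = p k * Q k l)
    (vQp wQp : (K → ℝ) → ℝ)
    (hvp : ∀ p' : K → ℝ, vQp p' =
      ⨅ t : L → T, ⨆ s : K → S,
        ∑ k, p' k * ∑ l, Q k l * G k l (s k : V) (t l : W))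
    (hwp : ∀ x : K → ℝ, wQp x =
      ⨅ t : L → T, ⨆ q : stdSimplex ℝ K, ⨆ s : S,
        ((∑ k, (q : K → ℝ) k * ∑ l, Q k l * G k l (s : V) (t l : W)) -
          ∑ k, (q : K → ℝ) k * x k))
    (vplus : ℝ)
    (hvplus : vplus =
      ⨅ t : L → T, ⨆ s : K → S, ∑ k, ∑ l, π (k, l) * G k l (s k : V) (t l : W))
    (x : K → ℝ)
    (hx : ∀ p' ∈ stdSimplex ℝ K,
      vQp p' ≤ vQp p + ∑ k, x k * (p' k - p k))
    (ε : ℝ) (hε : 0 ≤ ε)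
    (tε : L → T)
    (htε : (⨆ q : stdSimplex ℝ K, ⨆ s : S,
        ((∑ k, (q : K → ℝ) k * ∑ l, Q k l * G k l (s : V) (tε l : W)) -
          ∑ k, (q : K → ℝ) k * x k)) ≤ wQp x + ε) :
    (⨆ s : K → S, ∑ k, ∑ l, π (k, l) * G k l (s k : V) (tε l : W)) ≤
      vplus + ε := by
  classical
  obtain ⟨s₀, hs₀⟩ := hS
  obtain ⟨t₀v, ht₀v⟩ := hT
  haveI : Nonempty S := ⟨⟨s₀, hs₀⟩⟩
  haveI : Nonempty T := ⟨⟨t₀v, ht₀v⟩⟩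
  have hC0 : 0 ≤ C :=
    le_trans (abs_nonneg _) (hC (Classical.arbitrary K) (Classical.arbitrary L) s₀ hs₀ t₀v ht₀v)
  have hQnn : ∀ k l, 0 ≤ Q k l := fun k l => (hQ k).1 l
  have hQsum : ∀ k, ∑ l, Q k l = 1 := fun k => (hQ k).2
  -- the payoff of the intermediate game against strategy `s` in state `k`
  set fk : K → S → (L → T) → ℝ := fun k s t => ∑ l, Q k l * G k l (s : V) (t l : W)
    with hfk_def
  have hfk_bound : ∀ (k : K) (s : S) (t : L → T), |fk k s t| ≤ C := by
    intro k s t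
    calc |∑ l, Q k l * G k l (s : V) (t l : W)|
        ≤ ∑ l, |Q k l * G k l (s : V) (t l : W)| := Finset.abs_sum_le_sum_abs _ _
      _ = ∑ l, Q k l * |G k l (s : V) (t l : W)| := by
          refine Finset.sum_congr rfl fun l _ => ?_
          rw [abs_mul, abs_of_nonneg (hQnn k l)]
      _ ≤ ∑ l, Q k l * C :=
          Finset.sum_le_sum fun l _ =>
            mul_le_mul_of_nonneg_left (hC k l _ s.2 _ (t l).2) (hQnn k l)
      _ = C := by rw [← Finset.sum_mul, hQsum, one_mul]
  -- the value of the best response in state `k`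
  set A : K → (L → T) → ℝ := fun k t => ⨆ s : S, fk k s t with hA_def
  have hbddA : ∀ (k : K) (t : L → T), BddAbove (Set.range fun s : S => fk k s t) := by
    intro k t
    exact ⟨C, by rintro _ ⟨s, rfl⟩; exact le_trans (le_abs_self _) (hfk_bound k s t)⟩
  have hfk_le_A : ∀ (k : K) (t : L → T) (s : S), fk k s t ≤ A k t :=
    fun k t s => le_ciSup (hbddA k t) s
  have hA_le : ∀ (k : K) (t : L → T), A k t ≤ C :=
    fun k t => ciSup_le fun s => le_trans (le_abs_self _) (hfk_bound k s t)
  -- vertices of the simplex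
  have hvert : ∀ k : K, (Pi.single k 1 : K → ℝ) ∈ stdSimplex ℝ K := by
    intro k
    constructor
    · intro j
      rcases eq_or_ne j k with h | h <;> simp [Pi.single_apply, h]
    · simp [Pi.single_apply]
  haveI : Nonempty (stdSimplex ℝ K) :=
    ⟨⟨Pi.single (Classical.arbitrary K) 1, hvert _⟩⟩
  have hsingle_sum : ∀ (k : K) (g : K → ℝ),
      ∑ j, (Pi.single k 1 : K → ℝ) j * g j = g k := by
    intro k g
    rw [Finset.sum_eq_single k]
    · simp
    · intro j _ hj; simp [Pi.single_apply, hj]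
    · intro h; exact absurd (Finset.mem_univ k) h
  -- bounds on the dual payoff
  have hq_le_one : ∀ q ∈ stdSimplex ℝ K, ∀ k, q k ≤ 1 := by
    intro q hq k
    have := Finset.single_le_sum (f := q) (fun j _ => hq.1 j) (Finset.mem_univ k)
    rwa [hq.2] at this
  have hqx : ∀ q ∈ stdSimplex ℝ K, |∑ k, q k * x k| ≤ ∑ k, |x k| := by
    intro q hq
    calc |∑ k, q k * x k| ≤ ∑ k, |q k * x k| := Finset.abs_sum_le_sum_abs _ _
      _ ≤ ∑ k, |x k| := by
          refine Finset.sum_le_sum fun k _ => ?_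
          rw [abs_mul, abs_of_nonneg (hq.1 k)]
          nlinarith [abs_nonneg (x k), hq.1 k, hq_le_one q hq k]
  have hqfk : ∀ q ∈ stdSimplex ℝ K, ∀ (s : S) (t : L → T),
      |∑ k, q k * fk k s t| ≤ C := by
    intro q hq s t
    calc |∑ k, q k * fk k s t| ≤ ∑ k, |q k * fk k s t| := Finset.abs_sum_le_sum_abs _ _
      _ = ∑ k, q k * |fk k s t| := by
          refine Finset.sum_congr rfl fun k _ => ?_
          rw [abs_mul, abs_of_nonneg (hq.1 k)]
      _ ≤ ∑ k, q k * C :=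
          Finset.sum_le_sum fun k _ =>
            mul_le_mul_of_nonneg_left (hfk_bound k s t) (hq.1 k)
      _ = C := by rw [← Finset.sum_mul, hq.2, one_mul]
  set D : ℝ := C + ∑ k, |x k| with hD_def
  have hH_ub : ∀ (t : L → T) (q : stdSimplex ℝ K) (s : S),
      (∑ k, (q : K → ℝ) k * fk k s t) - (∑ k, (q : K → ℝ) k * x k) ≤ D := by
    intro t q s
    have h1 := abs_le.mp (hqfk q q.2 s t)
    have h2 := abs_le.mp (hqx q q.2)
    rw [hD_def]; linarith [h1.2, h2.1]
  have hH_lb : ∀ (t : L → T) (q : stdSimplex ℝ K) (s : S),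
      -D ≤ (∑ k, (q : K → ℝ) k * fk k s t) - (∑ k, (q : K → ℝ) k * x k) := by
    intro t q s
    have h1 := abs_le.mp (hqfk q q.2 s t)
    have h2 := abs_le.mp (hqx q q.2)
    rw [hD_def]; linarith [h1.1, h2.2]
  -- the dual payoff sup
  set F : (L → T) → ℝ := fun t => ⨆ q : stdSimplex ℝ K, ⨆ s : S,
      ((∑ k, (q : K → ℝ) k * fk k s t) - ∑ k, (q : K → ℝ) k * x k) with hF_def
  have hbdd_inner : ∀ (t : L → T) (q : stdSimplex ℝ K),
      BddAbove (Set.range fun s : S =>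
        (∑ k, (q : K → ℝ) k * fk k s t) - ∑ k, (q : K → ℝ) k * x k) :=
    fun t q => ⟨D, by rintro _ ⟨s, rfl⟩; exact hH_ub t q s⟩
  have hbdd_outer : ∀ t : L → T,
      BddAbove (Set.range fun q : stdSimplex ℝ K => ⨆ s : S,
        ((∑ k, (q : K → ℝ) k * fk k s t) - ∑ k, (q : K → ℝ) k * x k)) :=
    fun t => ⟨D, by rintro _ ⟨q, rfl⟩; exact ciSup_le (hH_ub t q)⟩
  have hH_le_F : ∀ (t : L → T) (q : stdSimplex ℝ K) (s : S),
      ((∑ k, (q : K → ℝ) k * fk k s t) - ∑ k, (q : K → ℝ) k * x k) ≤ F t :=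
    fun t q s => le_trans (le_ciSup (hbdd_inner t q) s) (le_ciSup (hbdd_outer t) q)
  have hF_lb : ∀ t : L → T, -D ≤ F t := by
    intro t
    refine le_trans (hH_lb t ⟨Pi.single (Classical.arbitrary K) 1, hvert _⟩ ⟨s₀, hs₀⟩) ?_
    exact hH_le_F t _ _
  have hbddF : BddBelow (Set.range F) := ⟨-D, by rintro _ ⟨t, rfl⟩; exact hF_lb t⟩
  -- decoupling inequality
  have hdec : ∀ ν : K → ℝ, (∀ k, 0 ≤ ν k) → (∑ k, ν k = 1) → ∀ t : L → T,
      (∑ k, ν k * A k t) ≤ ⨆ s : K → S, ∑ k, ν k * fk k (s k) t := by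
    intro ν hν1 hν2 t
    have hbdd : BddAbove (Set.range fun s : K → S => ∑ k, ν k * fk k (s k) t) := by
      refine ⟨C, ?_⟩
      rintro _ ⟨s, rfl⟩
      calc ∑ k, ν k * fk k (s k) t ≤ ∑ k, ν k * C :=
            Finset.sum_le_sum fun k _ => mul_le_mul_of_nonneg_left
              (le_trans (le_abs_self _) (hfk_bound k (s k) t)) (hν1 k)
        _ = C := by rw [← Finset.sum_mul, hν2, one_mul]
    refine le_of_forall_pos_le_add ?_
    intro δ hδ
    have hch : ∀ k, ∃ s : S, A k t - δ < fk k s t := by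
      intro k
      exact exists_lt_of_lt_ciSup (by linarith : A k t - δ < A k t)
    choose sel hsel using hch
    calc ∑ k, ν k * A k t ≤ ∑ k, ν k * (fk k (sel k) t + δ) :=
          Finset.sum_le_sum fun k _ =>
            mul_le_mul_of_nonneg_left (by linarith [hsel k]) (hν1 k)
      _ = (∑ k, ν k * fk k (sel k) t) + δ := by
          simp only [mul_add]
          rw [Finset.sum_add_distrib, ← Finset.sum_mul, hν2, one_mul]
      _ ≤ (⨆ s : K → S, ∑ k, ν k * fk k (s k) t) + δ :=
          add_le_add (le_ciSup hbdd sel) le_rfl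
  -- the primal payoff equals the intermediate payoff
  have hγ : ∀ (s : K → S) (t : L → T),
      (∑ k, ∑ l, π (k, l) * G k l (s k : V) (t l : W)) = ∑ k, p k * fk k (s k) t := by
    intro s t
    refine Finset.sum_congr rfl fun k _ => ?_
    rw [hfk_def]
    simp only [Finset.mul_sum]
    exact Finset.sum_congr rfl fun l _ => by rw [hπpQ k l, mul_assoc]
  have hvE : vplus = vQp p := by
    rw [hvplus, hvp]
    congr 1
    funext t
    congr 1
    funext s
    exact hγ s t
  -- Step A : the primal sup is at most the decoupled sup
  have hpA : (⨆ s : K → S, ∑ k, ∑ l, π (k, l) * G k l (s k : V) (tε l : W))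
      ≤ ∑ k, p k * A k tε := by
    refine ciSup_le fun s => ?_
    rw [hγ s tε]
    exact Finset.sum_le_sum fun k _ =>
      mul_le_mul_of_nonneg_left (hfk_le_A k tε (s k)) (hp.1 k)
  -- Step B : vertex bound
  have hM : ∀ (k : K) (s : S), fk k s tε - x k ≤ F tε := by
    intro k s
    have h := hH_le_F tε ⟨Pi.single k 1, hvert k⟩ s
    change ∑ j, (Pi.single k 1 : K → ℝ) j * fk j s tε - ∑ j, (Pi.single k 1 : K → ℝ) j * x j ≤ F tε at h
    rw [hsingle_sum k (fun j => fk j s tε), hsingle_sum k x] at h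
    exact h
  have hBstep : ∑ k, p k * A k tε ≤ F tε + ∑ k, p k * x k := by
    have h1 : ∀ k, A k tε ≤ F tε + x k := by
      intro k
      refine ciSup_le fun s => ?_
      have := hM k s; linarith
    calc ∑ k, p k * A k tε ≤ ∑ k, p k * (F tε + x k) :=
          Finset.sum_le_sum fun k _ => mul_le_mul_of_nonneg_left (h1 k) (hp.1 k)
      _ = F tε + ∑ k, p k * x k := by
          simp only [mul_add]
          rw [Finset.sum_add_distrib, ← Finset.sum_mul, hp.2, one_mul]
  -- Step C : htε restated
  have htεF : F tε ≤ wQp x + ε := htε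
  -- Step D : the heart of the matter, via separation
  have hD2 : wQp x ≤ vQp p - ∑ k, x k * p k := by
    by_contra hcon
    push_neg at hcon
    set w : ℝ := wQp x with hw_def
    set Eset : Set (K → ℝ) := {y | ∃ t : L → T, ∀ k, A k t ≤ y k} with hE_def
    set Bset : Set (K → ℝ) := Set.univ.pi fun k => Set.Iio (x k + w) with hB_def
    have hBopen : IsOpen Bset := isOpen_set_pi Set.finite_univ fun k _ => isOpen_Iio
    have hBconv : Convex ℝ Bset := convex_pi fun k _ => convex_Iio _
    have hmemB : ∀ y : K → ℝ, (∀ k, y k < x k + w) → y ∈ Bset := by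
      intro y hy
      rw [hB_def]
      intro k _
      exact hy k
    have hmemB' : ∀ y : K → ℝ, y ∈ Bset → ∀ k, y k < x k + w := by
      intro y hy k
      rw [hB_def] at hy
      exact hy k (Set.mem_univ k)
    have hEconv : Convex ℝ Eset := by
      rintro y₁ ⟨t₁, ht₁⟩ y₂ ⟨t₂, ht₂⟩ a b ha hb hab
      set tm : L → T := fun l =>
        ⟨a • (t₁ l : W) + b • (t₂ l : W), hTconv (t₁ l).2 (t₂ l).2 ha hb hab⟩ with htm_def
      refine ⟨tm, fun k => ?_⟩
      refine ciSup_le fun s => ?_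
      have heq : fk k s tm = a * fk k s t₁ + b * fk k s t₂ := by
        show (∑ l, Q k l * G k l (s : V) (a • (t₁ l : W) + b • (t₂ l : W)))
            = a * (∑ l, Q k l * G k l (s : V) (t₁ l : W))
              + b * (∑ l, Q k l * G k l (s : V) (t₂ l : W))
        rw [Finset.mul_sum, Finset.mul_sum, ← Finset.sum_add_distrib]
        refine Finset.sum_congr rfl fun l _ => ?_
        rw [hGaff₂ k l (s : V) s.2 (t₁ l : W) (t₁ l).2 (t₂ l : W) (t₂ l).2 a b ha hb hab]
        ring
      rw [heq]
      have e1 := hfk_le_A k t₁ s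
      have e2 := hfk_le_A k t₂ s
      have e3 := ht₁ k
      have e4 := ht₂ k
      have : (a • y₁ + b • y₂) k = a * y₁ k + b * y₂ k := by
        simp [smul_eq_mul]
      rw [this]
      nlinarith
    have hdisj : Disjoint Bset Eset := by
      rw [Set.disjoint_left]
      rintro y hyB ⟨t, hyt⟩
      have hball : ∀ k, y k < x k + w := hmemB' y hyB
      obtain ⟨k₀, -, hk₀⟩ := Finset.exists_max_image Finset.univ (fun k => y k - x k)
        ⟨Classical.arbitrary K, Finset.mem_univ _⟩
      set m : ℝ := y k₀ - x k₀ with hm_def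
      have hm1 : ∀ k, y k - x k ≤ m := fun k => hk₀ k (Finset.mem_univ k)
      have hm2 : m < w := by have := hball k₀; rw [hm_def]; linarith
      have hFt : F t ≤ m := by
        refine ciSup_le fun q => ciSup_le fun s => ?_
        have h1 : ∀ k, (q : K → ℝ) k * fk k s t ≤ (q : K → ℝ) k * (x k + m) := by
          intro k
          refine mul_le_mul_of_nonneg_left ?_ (q.2.1 k)
          have := hfk_le_A k t s
          have := hyt k
          have := hm1 k
          linarith
        have h2 : (∑ k, (q : K → ℝ) k * fk k s t) ≤ ∑ k, (q : K → ℝ) k * (x k + m) :=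
          Finset.sum_le_sum fun k _ => h1 k
        have h3 : ∑ k, (q : K → ℝ) k * (x k + m)
            = (∑ k, (q : K → ℝ) k * x k) + m := by
          simp only [mul_add]
          rw [Finset.sum_add_distrib, ← Finset.sum_mul, (by exact q.2.2 : ∑ i, (q : K → ℝ) i = 1), one_mul]
        linarith
      have hwle : w ≤ F t := by
        rw [hw_def, hwp]
        exact ciInf_le hbddF t
      linarith
    obtain ⟨φ, u, hφB, hφE⟩ := geometric_hahn_banach_open hBconv hBopen hEconv hdisj
    set μ : K → ℝ := fun k => φ (Pi.single k 1) with hμ_def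
    have hφ_eq : ∀ y : K → ℝ, φ y = ∑ k, y k * μ k := by
      intro y
      have hy : y = ∑ k, y k • (Pi.single k 1 : K → ℝ) := by
        funext j
        rw [Finset.sum_apply]
        rw [Finset.sum_eq_single j]
        · simp
        · intro k _ hk; simp [Pi.single_apply, Ne.symm hk]
        · intro h; exact absurd (Finset.mem_univ j) h
      conv_lhs => rw [hy]
      rw [map_sum]
      refine Finset.sum_congr rfl fun k _ => ?_
      rw [map_smul, smul_eq_mul, hμ_def]
    set a : K → ℝ := fun k => x k + w - 1 with ha_def
    have haB : ∀ δ : ℝ, 0 < δ → (fun k => x k + w - δ) ∈ Bset := by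
      intro δ hδ
      refine hmemB _ fun k => ?_
      linarith
    have hμnn : ∀ k, 0 ≤ μ k := by
      intro k
      by_contra hneg
      push_neg at hneg
      obtain ⟨n, hn⟩ := exists_nat_gt ((u - φ a) / (-μ k))
      have hmem : a - (n : ℝ) • (Pi.single k 1 : K → ℝ) ∈ Bset := by
        refine hmemB _ fun j => ?_
        have h0 : (0 : ℝ) ≤ (n : ℝ) * (Pi.single k 1 : K → ℝ) j := by
          rcases eq_or_ne j k with h | h <;>
            simp [Pi.single_apply, h] <;> positivity
        have : (a - (n : ℝ) • (Pi.single k 1 : K → ℝ)) j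
            = a j - (n : ℝ) * (Pi.single k 1 : K → ℝ) j := by
          simp [smul_eq_mul]
        rw [this, ha_def]
        simp only []
        linarith
      have hlt := hφB _ hmem
      rw [map_sub, map_smul, smul_eq_mul] at hlt
      have h2 : u - φ a < (n : ℝ) * (-μ k) := by
        rw [div_lt_iff₀ (by linarith : (0 : ℝ) < -μ k)] at hn
        linarith
      have h3 : φ (Pi.single k 1) = μ k := by rw [hμ_def]
      rw [h3] at hlt
      linarith
    have haB1 : a ∈ Bset := by
      rw [ha_def]; exact haB 1 one_pos
    set t₀ : L → T := fun _ => ⟨t₀v, ht₀v⟩ with ht₀_def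
    have hEy0 : (fun k => A k t₀) ∈ Eset := ⟨t₀, fun k => le_refl _⟩
    have hsum_pos : 0 < ∑ k, μ k := by
      rcases (Finset.sum_nonneg fun k _ => hμnn k).lt_or_eq with h | h
      · exact h
      · exfalso
        have hzero : ∀ k ∈ Finset.univ, μ k = 0 :=
          (Finset.sum_eq_zero_iff_of_nonneg fun k _ => hμnn k).mp h.symm
        have h1 := hφB _ haB1
        have h2 := hφE _ hEy0
        rw [hφ_eq] at h1 h2
        have e1 : (∑ k, a k * μ k) = 0 :=
          Finset.sum_eq_zero fun k _ => by rw [hzero k (Finset.mem_univ k), mul_zero]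
        have e2 : (∑ k, A k t₀ * μ k) = 0 :=
          Finset.sum_eq_zero fun k _ => by rw [hzero k (Finset.mem_univ k), mul_zero]
        rw [e1] at h1
        rw [e2] at h2
        linarith
    set Sμ : ℝ := ∑ k, μ k with hSμ_def
    have hSμ_pos : 0 < Sμ := hsum_pos
    set ν : K → ℝ := fun k => μ k / Sμ with hν_def
    have hνmem : ν ∈ stdSimplex ℝ K := by
      constructor
      · intro k
        exact div_nonneg (hμnn k) hSμ_pos.le
      · rw [hν_def]
        simp only []
        rw [← Finset.sum_div, ← hSμ_def, div_self hSμ_pos.ne']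
    have hkey : ∀ t : L → T, (∑ k, x k * ν k) + w ≤ ∑ k, ν k * A k t := by
      intro t
      have hEφ : u ≤ ∑ k, A k t * μ k := by
        have h := hφE _ (⟨t, fun k => le_refl _⟩ : (fun k => A k t) ∈ Eset)
        rwa [hφ_eq] at h
      have hstep : ∀ δ : ℝ, 0 < δ → (∑ k, x k * μ k) + (w - δ) * Sμ < u := by
        intro δ hδ
        have h := hφB _ (haB δ hδ)
        rw [hφ_eq] at h
        have e1 : (∑ k, (x k + w - δ) * μ k)
            = (∑ k, x k * μ k) + (w - δ) * Sμ := by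
          rw [hSμ_def, Finset.mul_sum, ← Finset.sum_add_distrib]
          exact Finset.sum_congr rfl fun k _ => by ring
        rw [e1] at h
        exact h
      have hmain : (∑ k, x k * μ k) + w * Sμ ≤ ∑ k, A k t * μ k := by
        by_contra hcc
        push_neg at hcc
        set d : ℝ := (∑ k, x k * μ k) + w * Sμ - ∑ k, A k t * μ k with hd_def
        have hd : 0 < d := by rw [hd_def]; linarith
        have h := hstep (d / (2 * Sμ)) (by positivity)
        have h3 : (w - d / (2 * Sμ)) * Sμ = w * Sμ - d / 2 := by
          field_simp
        rw [h3] at h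
        have hdd : d < d / 2 := by
          have := hEφ
          rw [hd_def] at *
          linarith
        linarith
      have e1 : ∑ k, x k * ν k = (∑ k, x k * μ k) / Sμ := by
        rw [Finset.sum_div]
        exact Finset.sum_congr rfl fun k _ => by rw [hν_def]; ring
      have e2 : ∑ k, ν k * A k t = (∑ k, A k t * μ k) / Sμ := by
        rw [Finset.sum_div]
        exact Finset.sum_congr rfl fun k _ => by rw [hν_def]; ring
      rw [e1, e2]
      rw [div_add' _ _ _ hSμ_pos.ne', div_le_div_iff₀ hSμ_pos hSμ_pos]
      nlinarith [hmain]
    have hvν : (∑ k, x k * ν k) + w ≤ vQp ν := by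
      rw [hvp]
      refine le_ciInf fun t => ?_
      exact le_trans (hkey t) (hdec ν hνmem.1 hνmem.2 t)
    have hsg := hx ν hνmem
    have hexp : ∑ k, x k * (ν k - p k) = (∑ k, x k * ν k) - ∑ k, x k * p k := by
      rw [← Finset.sum_sub_distrib]
      exact Finset.sum_congr rfl fun k _ => by ring
    rw [hexp] at hsg
    have : w < w := by
      calc w ≤ vQp ν - ∑ k, x k * ν k := by linarith [hvν]
        _ ≤ vQp p - ∑ k, x k * p k := by linarith [hsg]
        _ < w := hcon
    exact lt_irrefl _ this
  -- assemble
  have hcomm : ∑ k, p k * x k = ∑ k, x k * p k :=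
    Finset.sum_congr rfl fun k _ => mul_comm _ _
  calc (⨆ s : K → S, ∑ k, ∑ l, π (k, l) * G k l (s k : V) (tε l : W))
      ≤ ∑ k, p k * A k tε := hpA
    _ ≤ F tε + ∑ k, p k * x k := hBstep
    _ ≤ (wQp x + ε) + ∑ k, p k * x k := by linarith [htεF]
    _ ≤ vQp p + ε := by rw [hcomm]; linarith [hD2]
    _ = vplus + ε := by rw [hvE]
end

section
/- Assume θ_1 < 1. Let p∈Δ(K), Q∈Δ(L)^K, x∈ℝ^K, set π := p⊗Q, and let ŝ, t̂ be strategies with first-stage strategies σ, τ. Then h_θ[x,Q](p,ŝ,t̂) = (1−θ_1)·Σ_{i: P^π_{στ}(i)>0} P^π_{στ}(i)·( Σ_{j: P^π_{στ}(j|i)>0} P^π_{στ}(j|i)·γ_{θ^+}(π_{ij}, ŝ^+_{ij}, t̂^+_{ij}) − ⟨p_i, (x − θ_1·G^Q_{iτ})/(1−θ_1)⟩ ), where p_i := (P^π_{στ}(k|i))_{k∈K} ∈ Δ(K) and G^Q_{iτ} := (Σ_{ℓ,j} Q(ℓ|k)τ^ℓ(j)G^{kℓ}(i,j))_{k∈K}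 ∈ ℝ^K. -/
open scoped BigOperators

noncomputable section RepeatedGames

/-- Probability of a finite history (list of action pairs, in chronological
order) under behavioral strategies `s`, `t` (which map the list of past action
pairs to a mixed action). -/
def probH {I J : Type*} (s : List (I × J) → I → ℝ) (t : List (I × J) → J → ℝ) :
    List (I × J) → ℝ
  | [] => 1
  | a :: h =>
      s [] a.1 * t [] a.2 *
        probH (fun h' => s (a :: h')) (fun h' => t (a :: h')) h

/-- Expected stage payoff at stage `m+1` (i.e. after `m` completed stages). -/
def stagePay {I J : Type*} [Fintype I] [Fintype J]
    (s : List (I × J) → I → ℝ) (t : List (I × J) → J → ℝ)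
    (g : I → J → ℝ) (m : ℕ) : ℝ :=
  ∑ h : Fin m → I × J,
    probH s t (List.ofFn h) *
      ∑ i, ∑ j, s (List.ofFn h) i * t (List.ofFn h) j * g i j

/-- Behavioral strategies of a player with type set `X` and action set `A`,
observing histories in `(I × J)^*`. -/
def Strat (I J X A : Type*) [Fintype A] : Type _ :=
  {f : X → List (I × J) → A → ℝ // ∀ x h, f x h ∈ stdSimplex ℝ A}

instance {I J X A : Type*} [Fintype A] [Nonempty A] :
    Nonempty (Strat I J X A) := by
  refine ⟨⟨fun _ _ _ => (Fintype.card A : ℝ)⁻¹, fun x h => ⟨fun a => by positivity, ?_⟩⟩⟩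
  have hA : (Fintype.card A : ℝ) ≠ 0 := by
    exact_mod_cast Fintype.card_ne_zero
  simp [Finset.sum_const, Finset.card_univ, nsmul_eq_mul, mul_inv_cancel₀ hA]

/-- The auxiliary `θ`-weighted payoff `γ_θ(π, ŝ, t̂; ζ)`. -/
def payA {I J K L : Type*} [Fintype I] [Fintype J] [Fintype K] [Fintype L]
    (θ : ℕ → ℝ) (G : K → L → I → J → ℝ) (π : K × L → ℝ) (ζ : K → ℝ)
    (s : Strat I J K I) (t : Strat I J L J) : ℝ :=
  ∑ k, ∑ l, π (k, l) * ζ k *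
    ∑' m : ℕ, θ m * stagePay (s.1 k) (t.1 l) (G k l) m

/-- The `θ`-weighted payoff `γ_θ(π, ŝ, t̂)`. -/
def pay {I J K L : Type*} [Fintype I] [Fintype J] [Fintype K] [Fintype L]
    (θ : ℕ → ℝ) (G : K → L → I → J → ℝ) (π : K × L → ℝ)
    (s : Strat I J K I) (t : Strat I J L J) : ℝ :=
  payA θ G π (fun _ => 1) s t

/-- Maxmin `v⁻_θ(π)` of the repeated game `𝒢_θ(π)`. -/
def vMinus {I J K L : Type*} [Fintype I] [Fintype J] [Fintype K] [Fintype L]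
    (θ : ℕ → ℝ) (G : K → L → I → J → ℝ) (π : K × L → ℝ) : ℝ :=
  ⨆ s : Strat I J K I, ⨅ t : Strat I J L J, pay θ G π s t

/-- Minmax `v⁺_θ(π)` of the repeated game `𝒢_θ(π)`. -/
def vPlus {I J K L : Type*} [Fintype I] [Fintype J] [Fintype K] [Fintype L]
    (θ : ℕ → ℝ) (G : K → L → I → J → ℝ) (π : K × L → ℝ) : ℝ :=
  ⨅ t : Strat I J L J, ⨆ s : Strat I J K I, pay θ G π s t

/-- Dual payoff `h_θ[x,Q;ζ](p,ŝ,t̂) = γ_θ(p⊗Q, ŝ, t̂; ζ) − ⟨p,x⟩`. -/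
def hDual {I J K L : Type*} [Fintype I] [Fintype J] [Fintype K] [Fintype L]
    (θ : ℕ → ℝ) (G : K → L → I → J → ℝ) (x : K → ℝ) (Q : K → L → ℝ)
    (ζ : K → ℝ) (p : K → ℝ) (s : Strat I J K I) (t : Strat I J L J) : ℝ :=
  payA θ G (fun kl => p kl.1 * Q kl.1 kl.2) ζ s t - ∑ k, p k * x k

/-- Maxmin `w⁻_θ(x,Q;ζ)` of the dual game `𝒟[𝒢_θ](x,Q;ζ)`. -/
def wMinus {I J K L : Type*} [Fintype I] [Fintype J] [Fintype K] [Fintype L]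
    (θ : ℕ → ℝ) (G : K → L → I → J → ℝ) (x : K → ℝ) (Q : K → L → ℝ)
    (ζ : K → ℝ) : ℝ :=
  ⨆ ps : stdSimplex ℝ K × Strat I J K I, ⨅ t : Strat I J L J,
    hDual θ G x Q ζ (ps.1 : K → ℝ) ps.2 t

/-- Minmax `w⁺_θ(x,Q;ζ)` of the dual game `𝒟[𝒢_θ](x,Q;ζ)`. -/
def wPlus {I J K L : Type*} [Fintype I] [Fintype J] [Fintype K] [Fintype L]
    (θ : ℕ → ℝ) (G : K → L → I → J → ℝ) (x : K → ℝ) (Q : K → L → ℝ)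
    (ζ : K → ℝ) : ℝ :=
  ⨅ t : Strat I J L J, ⨆ ps : stdSimplex ℝ K × Strat I J K I,
    hDual θ G x Q ζ (ps.1 : K → ℝ) ps.2 t

end RepeatedGames

section Aux12

variable {I J : Type*} [Fintype I] [Fintype J]

lemma sum_fin_succ_aux {γ : Type*} [Fintype γ] (m : ℕ) (F : (Fin (m + 1) → γ) → ℝ) :
    ∑ h : Fin (m + 1) → γ, F h = ∑ a : γ, ∑ h' : Fin m → γ, F (Fin.cons a h') := by
  rw [← Equiv.sum_comp (Fin.consEquiv fun _ => γ) F, Fintype.sum_prod_type]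
  rfl

lemma ofFn_cons_aux {γ : Type*} {m : ℕ} (a : γ) (h' : Fin m → γ) :
    List.ofFn (Fin.cons a h') = a :: List.ofFn h' := by
  rw [List.ofFn_succ]
  simp

lemma probH_nonneg_aux :
    ∀ (l : List (I × J)) (s : List (I × J) → I → ℝ) (t : List (I × J) → J → ℝ),
      (∀ h i, 0 ≤ s h i) → (∀ h j, 0 ≤ t h j) → 0 ≤ probH s t l := by
  intro l
  induction l with
  | nil => intro s t _ _; rw [probH]; norm_num
  | cons a l ih =>
      intro s t hs ht
      rw [probH]
      exact mul_nonneg (mul_nonneg (hs _ _) (ht _ _))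
        (ih _ _ (fun h i => hs _ i) (fun h j => ht _ j))

lemma sum_probH_aux :
    ∀ (m : ℕ) (s : List (I × J) → I → ℝ) (t : List (I × J) → J → ℝ),
      (∀ h, ∑ i, s h i = 1) → (∀ h, ∑ j, t h j = 1) →
      ∑ h : Fin m → I × J, probH s t (List.ofFn h) = 1 := by
  intro m
  induction m with
  | zero =>
      intro s t _ _
      simp [probH]
  | succ m ih =>
      intro s t hs ht
      rw [sum_fin_succ_aux]
      have key : ∀ a : I × J,
          ∑ h' : Fin m → I × J, probH s t (List.ofFn (Fin.cons a h'))
            = s [] a.1 * t [] a.2 := by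
        intro a
        have h1 : ∀ h' : Fin m → I × J, probH s t (List.ofFn (Fin.cons a h'))
            = s [] a.1 * t [] a.2 *
              probH (fun h => s (a :: h)) (fun h => t (a :: h)) (List.ofFn h') := by
          intro h'
          rw [ofFn_cons_aux, probH]
        rw [Finset.sum_congr rfl fun h' _ => h1 h', ← Finset.mul_sum,
          ih _ _ (fun h => hs _) (fun h => ht _), mul_one]
      rw [Finset.sum_congr rfl fun a _ => key a, Fintype.sum_prod_type]
      simp [← Finset.mul_sum, ht [], hs []]

lemma stagePay_succ_aux (s : List (I × J) → I → ℝ) (t : List (I × J) → J → ℝ)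
    (g : I → J → ℝ) (m : ℕ) :
    stagePay s t g (m + 1) =
      ∑ i, ∑ j, s [] i * t [] j *
        stagePay (fun h => s ((i, j) :: h)) (fun h => t ((i, j) :: h)) g m := by
  rw [stagePay, sum_fin_succ_aux, Fintype.sum_prod_type]
  refine Finset.sum_congr rfl fun i _ => Finset.sum_congr rfl fun j _ => ?_
  rw [stagePay, Finset.mul_sum]
  refine Finset.sum_congr rfl fun h' _ => ?_
  rw [ofFn_cons_aux, probH]
  beta_reduce
  ring

lemma abs_stagePay_le_aux (s : List (I × J) → I → ℝ) (t : List (I × J) → J → ℝ)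
    (g : I → J → ℝ) (hs : ∀ h, s h ∈ stdSimplex ℝ I) (ht : ∀ h, t h ∈ stdSimplex ℝ J)
    (m : ℕ) :
    |stagePay s t g m| ≤ ∑ i, ∑ j, |g i j| := by
  have hBnn : (0:ℝ) ≤ ∑ i, ∑ j, |g i j| :=
    Finset.sum_nonneg fun i _ => Finset.sum_nonneg fun j _ => abs_nonneg _
  have hinner : ∀ h : List (I × J),
      |∑ i, ∑ j, s h i * t h j * g i j| ≤ ∑ i, ∑ j, |g i j| := by
    intro h
    refine (Finset.abs_sum_le_sum_abs _ _).trans ?_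
    refine Finset.sum_le_sum fun i _ => ?_
    refine (Finset.abs_sum_le_sum_abs _ _).trans ?_
    refine Finset.sum_le_sum fun j _ => ?_
    rw [abs_mul, abs_mul]
    have h1 : |s h i| ≤ 1 := by
      rw [abs_of_nonneg ((hs h).1 i)]
      calc s h i ≤ ∑ i', s h i' :=
            Finset.single_le_sum (fun i' _ => (hs h).1 i') (Finset.mem_univ i)
        _ = 1 := (hs h).2
    have h2 : |t h j| ≤ 1 := by
      rw [abs_of_nonneg ((ht h).1 j)]
      calc t h j ≤ ∑ j', t h j' :=
            Finset.single_le_sum (fun j' _ => (ht h).1 j') (Finset.mem_univ j)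
        _ = 1 := (ht h).2
    calc |s h i| * |t h j| * |g i j| ≤ 1 * 1 * |g i j| := by
          gcongr <;> positivity
      _ = |g i j| := by ring
  have hpnn : ∀ h : Fin m → I × J, 0 ≤ probH s t (List.ofFn h) := fun h =>
    probH_nonneg_aux _ _ _ (fun h' i => (hs h').1 i) (fun h' j => (ht h').1 j)
  rw [stagePay]
  refine (Finset.abs_sum_le_sum_abs _ _).trans ?_
  have hstep : ∀ h : Fin m → I × J,
      |probH s t (List.ofFn h) *
        ∑ i, ∑ j, s (List.ofFn h) i * t (List.ofFn h) j * g i j|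
      ≤ probH s t (List.ofFn h) * ∑ i, ∑ j, |g i j| := by
    intro h
    rw [abs_mul, abs_of_nonneg (hpnn h)]
    exact mul_le_mul_of_nonneg_left (hinner _) (hpnn h)
  refine (Finset.sum_le_sum fun h _ => hstep h).trans ?_
  rw [← Finset.sum_mul, sum_probH_aux m s t (fun h => (hs h).2) (fun h => (ht h).2),
    one_mul]

lemma summable_theta_stage_aux (θ : ℕ → ℝ) (hθ : Summable θ) (hnn : ∀ m, 0 ≤ θ m)
    (s : List (I × J) → I → ℝ) (t : List (I × J) → J → ℝ) (g : I → J → ℝ)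
    (hs : ∀ h, s h ∈ stdSimplex ℝ I) (ht : ∀ h, t h ∈ stdSimplex ℝ J) :
    Summable (fun m => θ m * stagePay s t g m) := by
  refine Summable.of_norm_bounded
    (hθ.mul_right (∑ i, ∑ j, |g i j|)) fun m => ?_
  rw [Real.norm_eq_abs, abs_mul, abs_of_nonneg (hnn m)]
  exact mul_le_mul_of_nonneg_left (abs_stagePay_le_aux s t g hs ht m) (hnn m)

/-- The continuation value `γ_{θ⁺}`-summand used in the recursive formula. -/
noncomputable def Bfun {K L : Type*} (G : K → L → I → J → ℝ) (θplus : ℕ → ℝ)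
    (s : Strat I J K I) (t : Strat I J L J) (k : K) (l : L) (i : I) (j : J) : ℝ :=
  ∑' m, θplus m *
    stagePay (fun h => s.1 k ((i, j) :: h)) (fun h => t.1 l ((i, j) :: h)) (G k l) m

end Aux12

/-- recursive formula for the dual payoff
`h_θ[x,Q](p,ŝ,t̂) = γ_θ(p⊗Q,ŝ,t̂) − ⟨p,x⟩`, splitting the first stage from the
continuation games.  Stages are indexed from `0` (so `θ 0 = θ_1`); `Pi i` is
`P^π_{στ}(i)`, `Pij i j` is `P^π_{στ}(i,j)` (so `Pij i j / Pi i = P^π_{στ}(j|i)`),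
`pi i` is the posterior `p_i = (P^π_{στ}(k|i))_k`, `πij i j` is the conditional
law `π_{ij}`, and `GQ i` is the vector `G^Q_{iτ}`. -/
theorem stmt_12
    {K L I J : Type*} [Fintype K] [Fintype L] [Fintype I] [Fintype J]
    [Nonempty K] [Nonempty L] [Nonempty I] [Nonempty J]
    (G : K → L → I → J → ℝ)
    (θ : ℕ → ℝ) (hθ0 : ∀ m, 0 ≤ θ m) (hθ1 : HasSum θ 1) (hθlt : θ 0 < 1)
    (θplus : ℕ → ℝ) (hθplus : ∀ m, θplus m = θ (m + 1) / (1 - θ 0))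
    (p : K → ℝ) (hp : p ∈ stdSimplex ℝ K)
    (Q : K → L → ℝ) (hQ : ∀ k, Q k ∈ stdSimplex ℝ L)
    (x : K → ℝ)
    (π : K × L → ℝ) (hπ : ∀ k l, π (k, l) = p k * Q k l)
    (s : Strat I J K I) (t : Strat I J L J)
    (Pij : I → J → ℝ)
    (hPij : ∀ i j, Pij i j = ∑ k, ∑ l, π (k, l) * s.1 k [] i * t.1 l [] j)
    (Pi : I → ℝ)
    (hPi : ∀ i, Pi i = ∑ k, ∑ l, ∑ j, π (k, l) * s.1 k [] i * t.1 l [] j)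
    (pi : I → K → ℝ)
    (hpi : ∀ i k, pi i k =
      (∑ l, ∑ j, π (k, l) * s.1 k [] i * t.1 l [] j) / Pi i)
    (πij : I → J → K × L → ℝ)
    (hπij : ∀ i j kl, πij i j kl =
      π kl * s.1 kl.1 [] i * t.1 kl.2 [] j / Pij i j)
    (GQ : I → K → ℝ)
    (hGQ : ∀ i k, GQ i k = ∑ l, ∑ j, Q k l * t.1 l [] j * G k l i j) :
    hDual θ G x Q (fun _ => 1) p s t =
      (1 - θ 0) * ∑ i,
        (if 0 < Pi i then
          Pi i *
            ((∑ j,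
              if 0 < Pij i j / Pi i then
                (Pij i j / Pi i) *
                  pay θplus G (πij i j)
                    ⟨fun k h => s.1 k ((i, j) :: h), fun k h => s.2 k ((i, j) :: h)⟩
                    ⟨fun l h => t.1 l ((i, j) :: h), fun l h => t.2 l ((i, j) :: h)⟩
              else 0) -
            ∑ k, pi i k * ((x k - θ 0 * GQ i k) / (1 - θ 0)))
        else 0) := by
  classical
  have hpos : (0:ℝ) < 1 - θ 0 := by linarith
  have hne : (1:ℝ) - θ 0 ≠ 0 := ne_of_gt hpos
  have hσnn : ∀ k h i, 0 ≤ s.1 k h i := fun k h i => (s.2 k h).1 i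
  have hτnn : ∀ l h j, 0 ≤ t.1 l h j := fun l h j => (t.2 l h).1 j
  have hσ1 : ∀ k h, ∑ i, s.1 k h i = 1 := fun k h => (s.2 k h).2
  have hτ1 : ∀ l h, ∑ j, t.1 l h j = 1 := fun l h => (t.2 l h).2
  have hπnn : ∀ k l, 0 ≤ π (k, l) := fun k l => by
    rw [hπ]; exact mul_nonneg (hp.1 k) ((hQ k).1 l)
  have hθpnn : ∀ m, 0 ≤ θplus m := fun m => by
    rw [hθplus]; exact div_nonneg (hθ0 _) hpos.le
  have hθpsum : Summable θplus := by
    have h1 : Summable (fun m => θ (m + 1)) := (summable_nat_add_iff 1).2 hθ1.summable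
    exact (h1.div_const (1 - θ 0)).congr fun m => (hθplus m).symm
  -- step A: recursive formula for each tsum
  have stepA : ∀ k l,
      ∑' m, θ m * stagePay (s.1 k) (t.1 l) (G k l) m
        = θ 0 * stagePay (s.1 k) (t.1 l) (G k l) 0
          + ∑ i, ∑ j, (s.1 k [] i * t.1 l [] j * (1 - θ 0)) * Bfun G θplus s t k l i j := by
    intro k l
    have hsm : Summable (fun m => θ m * stagePay (s.1 k) (t.1 l) (G k l) m) :=
      summable_theta_stage_aux θ hθ1.summable hθ0 _ _ _ (s.2 k) (t.2 l)
    rw [Summable.tsum_eq_zero_add hsm]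
    congr 1
    have hbase : ∀ i j, Summable (fun m => θplus m *
        stagePay (fun h => s.1 k ((i, j) :: h)) (fun h => t.1 l ((i, j) :: h)) (G k l) m) :=
      fun i j => summable_theta_stage_aux θplus hθpsum hθpnn _ _ _
        (fun h => s.2 k _) (fun h => t.2 l _)
    have hterm : ∀ m, θ (m + 1) * stagePay (s.1 k) (t.1 l) (G k l) (m + 1)
        = ∑ i, ∑ j, (s.1 k [] i * t.1 l [] j * (1 - θ 0)) *
            (θplus m * stagePay (fun h => s.1 k ((i, j) :: h))
              (fun h => t.1 l ((i, j) :: h)) (G k l) m) := by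
      intro m
      rw [stagePay_succ_aux, Finset.mul_sum]
      refine Finset.sum_congr rfl fun i _ => ?_
      rw [Finset.mul_sum]
      refine Finset.sum_congr rfl fun j _ => ?_
      have hθm : θ (m + 1) = (1 - θ 0) * θplus m := by
        rw [hθplus]; field_simp
      rw [hθm]; ring
    rw [tsum_congr hterm,
      Summable.tsum_finsetSum (fun i _ => summable_sum fun j _ => ((hbase i j).mul_left _))]
    refine Finset.sum_congr rfl fun i _ => ?_
    rw [Summable.tsum_finsetSum (fun j _ => (hbase i j).mul_left _)]
    refine Finset.sum_congr rfl fun j _ => ?_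
    rw [Bfun]
    exact tsum_mul_left
  -- basic identities
  have hrow : ∀ i k, (∑ l, ∑ j, π (k, l) * s.1 k [] i * t.1 l [] j) = p k * s.1 k [] i := by
    intro i k
    calc ∑ l, ∑ j, π (k, l) * s.1 k [] i * t.1 l [] j
        = ∑ l, π (k, l) * s.1 k [] i * ∑ j, t.1 l [] j :=
          Finset.sum_congr rfl fun l _ => (Finset.mul_sum _ _ _).symm
      _ = ∑ l, π (k, l) * s.1 k [] i := by
          refine Finset.sum_congr rfl fun l _ => ?_
          rw [hτ1, mul_one]
      _ = (∑ l, Q k l) * (p k * s.1 k [] i) := by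
          rw [Finset.sum_mul]
          refine Finset.sum_congr rfl fun l _ => ?_
          rw [hπ]; ring
      _ = p k * s.1 k [] i := by rw [(hQ k).2, one_mul]
  have hPi_eq : ∀ i, Pi i = ∑ k, p k * s.1 k [] i := by
    intro i
    rw [hPi i]
    exact Finset.sum_congr rfl fun k _ => hrow i k
  have hPiNN : ∀ i, 0 ≤ Pi i := fun i => by
    rw [hPi_eq]
    exact Finset.sum_nonneg fun k _ => mul_nonneg (hp.1 k) (hσnn k [] i)
  have hπστnn : ∀ i j k l, 0 ≤ π (k, l) * s.1 k [] i * t.1 l [] j := fun i j k l =>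
    mul_nonneg (mul_nonneg (hπnn k l) (hσnn k [] i)) (hτnn l [] j)
  have hPijNN : ∀ i j, 0 ≤ Pij i j := fun i j => by
    rw [hPij]
    exact Finset.sum_nonneg fun k _ => Finset.sum_nonneg fun l _ => hπστnn i j k l
  have hPi_sumj : ∀ i, Pi i = ∑ j, Pij i j := by
    intro i
    calc Pi i = ∑ k, ∑ j, ∑ l, π (k, l) * s.1 k [] i * t.1 l [] j := by
          rw [hPi i]
          exact Finset.sum_congr rfl fun k _ => Finset.sum_comm
      _ = ∑ j, ∑ k, ∑ l, π (k, l) * s.1 k [] i * t.1 l [] j := Finset.sum_comm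
      _ = ∑ j, Pij i j := Finset.sum_congr rfl fun j _ => (hPij i j).symm
  have hPij_zero : ∀ i j, Pij i j = 0 → ∀ k l, π (k, l) * s.1 k [] i * t.1 l [] j = 0 := by
    intro i j h0 k l
    have h1 : ∑ k, ∑ l, π (k, l) * s.1 k [] i * t.1 l [] j = 0 := by
      rw [← hPij]; exact h0
    have h2 := (Finset.sum_eq_zero_iff_of_nonneg
      (fun k _ => Finset.sum_nonneg fun l _ => hπστnn i j k l)).1 h1 k (Finset.mem_univ k)
    exact (Finset.sum_eq_zero_iff_of_nonneg
      (fun l _ => hπστnn i j k l)).1 h2 l (Finset.mem_univ l)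
  have hpσ_zero : ∀ i, Pi i = 0 → ∀ k, p k * s.1 k [] i = 0 := by
    intro i h0 k
    have h1 : ∑ k, p k * s.1 k [] i = 0 := by rw [← hPi_eq]; exact h0
    exact (Finset.sum_eq_zero_iff_of_nonneg
      (fun k _ => mul_nonneg (hp.1 k) (hσnn k [] i))).1 h1 k (Finset.mem_univ k)
  have hPij_zero_of_Pi : ∀ i, Pi i = 0 → ∀ j, Pij i j = 0 := by
    intro i h0 j
    have h1 : ∑ j, Pij i j = 0 := by rw [← hPi_sumj]; exact h0
    exact (Finset.sum_eq_zero_iff_of_nonneg fun j _ => hPijNN i j).1 h1 j (Finset.mem_univ j)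
  -- expansion of the continuation payoff
  have hpay_expand : ∀ i j,
      pay θplus G (πij i j)
          ⟨fun k h => s.1 k ((i, j) :: h), fun k h => s.2 k ((i, j) :: h)⟩
          ⟨fun l h => t.1 l ((i, j) :: h), fun l h => t.2 l ((i, j) :: h)⟩
        = ∑ k, ∑ l, πij i j (k, l) * Bfun G θplus s t k l i j := by
    intro i j
    simp only [pay, payA, Bfun, mul_one]
  have claim2 : ∀ i j,
      (if 0 < Pij i j then Pij i j *
          pay θplus G (πij i j)
            ⟨fun k h => s.1 k ((i, j) :: h), fun k h => s.2 k ((i, j) :: h)⟩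
            ⟨fun l h => t.1 l ((i, j) :: h), fun l h => t.2 l ((i, j) :: h)⟩
        else 0)
      = ∑ k, ∑ l, π (k, l) * s.1 k [] i * t.1 l [] j * Bfun G θplus s t k l i j := by
    intro i j
    by_cases hij : 0 < Pij i j
    · rw [if_pos hij, hpay_expand i j, Finset.mul_sum]
      refine Finset.sum_congr rfl fun k _ => ?_
      rw [Finset.mul_sum]
      refine Finset.sum_congr rfl fun l _ => ?_
      have hkl := hπij i j (k, l)
      dsimp only at hkl
      rw [hkl]
      have hne' : Pij i j ≠ 0 := ne_of_gt hij
      field_simp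
    · rw [if_neg hij]
      have h0 : Pij i j = 0 := le_antisymm (not_lt.1 hij) (hPijNN i j)
      symm
      refine Finset.sum_eq_zero fun k _ => Finset.sum_eq_zero fun l _ => ?_
      rw [hPij_zero i j h0 k l, zero_mul]
  have claim1 : ∀ i,
      (if 0 < Pi i then
          Pi i *
            ((∑ j,
              if 0 < Pij i j / Pi i then
                (Pij i j / Pi i) *
                  pay θplus G (πij i j)
                    ⟨fun k h => s.1 k ((i, j) :: h), fun k h => s.2 k ((i, j) :: h)⟩
                    ⟨fun l h => t.1 l ((i, j) :: h), fun l h => t.2 l ((i, j) :: h)⟩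
              else 0) -
            ∑ k, pi i k * ((x k - θ 0 * GQ i k) / (1 - θ 0)))
        else 0)
      = (∑ j, ∑ k, ∑ l, π (k, l) * s.1 k [] i * t.1 l [] j * Bfun G θplus s t k l i j)
        - ∑ k, p k * s.1 k [] i * ((x k - θ 0 * GQ i k) / (1 - θ 0)) := by
    intro i
    by_cases hi : 0 < Pi i
    · rw [if_pos hi, mul_sub]
      congr 1
      · rw [Finset.mul_sum]
        refine Finset.sum_congr rfl fun j _ => ?_
        rw [← claim2 i j]
        by_cases hij : 0 < Pij i j
        · rw [if_pos (div_pos hij hi), if_pos hij, ← mul_assoc,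
            mul_comm (Pi i) (Pij i j / Pi i), div_mul_cancel₀ _ (ne_of_gt hi)]
        · have h0 : Pij i j = 0 := le_antisymm (not_lt.1 hij) (hPijNN i j)
          rw [if_neg hij, if_neg (by rw [h0, zero_div]; exact lt_irrefl 0), mul_zero]
      · rw [Finset.mul_sum]
        refine Finset.sum_congr rfl fun k _ => ?_
        rw [hpi i k, hrow i k, ← mul_assoc,
          mul_comm (Pi i) (p k * s.1 k [] i / Pi i), div_mul_cancel₀ _ (ne_of_gt hi)]
    · rw [if_neg hi]
      have h0 : Pi i = 0 := le_antisymm (not_lt.1 hi) (hPiNN i)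
      have hA : (∑ j, ∑ k, ∑ l,
          π (k, l) * s.1 k [] i * t.1 l [] j * Bfun G θplus s t k l i j) = 0 :=
        Finset.sum_eq_zero fun j _ => Finset.sum_eq_zero fun k _ =>
          Finset.sum_eq_zero fun l _ => by
            rw [hPij_zero i j (hPij_zero_of_Pi i h0 j) k l, zero_mul]
      have hC : (∑ k, p k * s.1 k [] i * ((x k - θ 0 * GQ i k) / (1 - θ 0))) = 0 :=
        Finset.sum_eq_zero fun k _ => by rw [hpσ_zero i h0 k, zero_mul]
      rw [hA, hC, sub_zero]
  -- rewrite the RHS using claim1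
  rw [Finset.sum_congr rfl fun i _ => claim1 i]
  -- rewrite the LHS
  have hLHS : hDual θ G x Q (fun _ => 1) p s t
      = ∑ k, ∑ l, π (k, l) * (∑' m, θ m * stagePay (s.1 k) (t.1 l) (G k l) m)
        - ∑ k, p k * x k := by
    simp only [hDual, payA, mul_one]
    congr 1
    refine Finset.sum_congr rfl fun k _ => Finset.sum_congr rfl fun l _ => ?_
    rw [hπ]
  rw [hLHS]
  have hsplit : ∑ k, ∑ l, π (k, l) * (∑' m, θ m * stagePay (s.1 k) (t.1 l) (G k l) m)
      = ∑ k, ∑ l, π (k, l) *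
          (θ 0 * stagePay (s.1 k) (t.1 l) (G k l) 0
            + ∑ i, ∑ j, (s.1 k [] i * t.1 l [] j * (1 - θ 0)) * Bfun G θplus s t k l i j) :=
    Finset.sum_congr rfl fun k _ => Finset.sum_congr rfl fun l _ => by rw [stepA k l]
  rw [hsplit]
  -- stage-0 payoff identity
  have ha0 : ∀ k l, stagePay (s.1 k) (t.1 l) (G k l) 0
      = ∑ i, ∑ j, s.1 k [] i * t.1 l [] j * G k l i j := by
    intro k l
    simp [stagePay, probH]
  have hG0 : ∀ k, ∑ l, π (k, l) * stagePay (s.1 k) (t.1 l) (G k l) 0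
      = ∑ i, p k * s.1 k [] i * GQ i k := by
    intro k
    calc ∑ l, π (k, l) * stagePay (s.1 k) (t.1 l) (G k l) 0
        = ∑ l, ∑ i, ∑ j, π (k, l) * (s.1 k [] i * t.1 l [] j * G k l i j) := by
          refine Finset.sum_congr rfl fun l _ => ?_
          rw [ha0 k l, Finset.mul_sum]
          refine Finset.sum_congr rfl fun i _ => ?_
          rw [Finset.mul_sum]
      _ = ∑ i, ∑ l, ∑ j, π (k, l) * (s.1 k [] i * t.1 l [] j * G k l i j) :=
          Finset.sum_comm
      _ = ∑ i, p k * s.1 k [] i * GQ i k := by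
          refine Finset.sum_congr rfl fun i _ => ?_
          rw [hGQ i k, Finset.mul_sum]
          refine Finset.sum_congr rfl fun l _ => ?_
          rw [Finset.mul_sum]
          refine Finset.sum_congr rfl fun j _ => ?_
          rw [hπ]; ring
  -- reorder the quadruple sum
  have hmain : ∑ k, ∑ l, π (k, l) *
        (∑ i, ∑ j, (s.1 k [] i * t.1 l [] j * (1 - θ 0)) * Bfun G θplus s t k l i j)
      = (1 - θ 0) * ∑ i, ∑ j, ∑ k, ∑ l,
          π (k, l) * s.1 k [] i * t.1 l [] j * Bfun G θplus s t k l i j := by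
    calc ∑ k, ∑ l, π (k, l) *
          (∑ i, ∑ j, (s.1 k [] i * t.1 l [] j * (1 - θ 0)) * Bfun G θplus s t k l i j)
        = ∑ k, ∑ l, ∑ i, ∑ j, π (k, l) *
            ((s.1 k [] i * t.1 l [] j * (1 - θ 0)) * Bfun G θplus s t k l i j) := by
          refine Finset.sum_congr rfl fun k _ => Finset.sum_congr rfl fun l _ => ?_
          rw [Finset.mul_sum]
          refine Finset.sum_congr rfl fun i _ => ?_
          rw [Finset.mul_sum]
      _ = ∑ k, ∑ i, ∑ l, ∑ j, π (k, l) *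
            ((s.1 k [] i * t.1 l [] j * (1 - θ 0)) * Bfun G θplus s t k l i j) :=
          Finset.sum_congr rfl fun k _ => Finset.sum_comm
      _ = ∑ i, ∑ k, ∑ l, ∑ j, π (k, l) *
            ((s.1 k [] i * t.1 l [] j * (1 - θ 0)) * Bfun G θplus s t k l i j) :=
          Finset.sum_comm
      _ = ∑ i, ∑ k, ∑ j, ∑ l, π (k, l) *
            ((s.1 k [] i * t.1 l [] j * (1 - θ 0)) * Bfun G θplus s t k l i j) :=
          Finset.sum_congr rfl fun i _ => Finset.sum_congr rfl fun k _ => Finset.sum_comm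
      _ = ∑ i, ∑ j, ∑ k, ∑ l, π (k, l) *
            ((s.1 k [] i * t.1 l [] j * (1 - θ 0)) * Bfun G θplus s t k l i j) :=
          Finset.sum_congr rfl fun i _ => Finset.sum_comm
      _ = (1 - θ 0) * ∑ i, ∑ j, ∑ k, ∑ l,
            π (k, l) * s.1 k [] i * t.1 l [] j * Bfun G θplus s t k l i j := by
          rw [Finset.mul_sum]
          refine Finset.sum_congr rfl fun i _ => ?_
          rw [Finset.mul_sum]
          refine Finset.sum_congr rfl fun j _ => ?_
          rw [Finset.mul_sum]
          refine Finset.sum_congr rfl fun k _ => ?_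
          rw [Finset.mul_sum]
          refine Finset.sum_congr rfl fun l _ => ?_
          ring
  -- the linear part
  have hx : (1 - θ 0) * ∑ i, ∑ k, p k * s.1 k [] i * ((x k - θ 0 * GQ i k) / (1 - θ 0))
      = ∑ k, p k * x k - θ 0 * ∑ i, ∑ k, p k * s.1 k [] i * GQ i k := by
    have h1 : (1 - θ 0) * ∑ i, ∑ k, p k * s.1 k [] i * ((x k - θ 0 * GQ i k) / (1 - θ 0))
        = ∑ i, ∑ k, p k * s.1 k [] i * (x k - θ 0 * GQ i k) := by
      rw [Finset.mul_sum]
      refine Finset.sum_congr rfl fun i _ => ?_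
      rw [Finset.mul_sum]
      refine Finset.sum_congr rfl fun k _ => ?_
      field_simp
    rw [h1]
    have h2 : ∑ i, ∑ k, p k * s.1 k [] i * (x k - θ 0 * GQ i k)
        = ∑ i, ∑ k, (p k * s.1 k [] i * x k - θ 0 * (p k * s.1 k [] i * GQ i k)) :=
      Finset.sum_congr rfl fun i _ => Finset.sum_congr rfl fun k _ => by ring
    rw [h2]
    have h3 : ∑ i, ∑ k, (p k * s.1 k [] i * x k - θ 0 * (p k * s.1 k [] i * GQ i k))
        = (∑ i, ∑ k, p k * s.1 k [] i * x k)
          - ∑ i, ∑ k, θ 0 * (p k * s.1 k [] i * GQ i k) := by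
      rw [← Finset.sum_sub_distrib]
      exact Finset.sum_congr rfl fun i _ => Finset.sum_sub_distrib _ _
    rw [h3]
    congr 1
    · calc ∑ i, ∑ k, p k * s.1 k [] i * x k
          = ∑ k, ∑ i, p k * s.1 k [] i * x k := Finset.sum_comm
        _ = ∑ k, p k * x k * ∑ i, s.1 k [] i := by
            refine Finset.sum_congr rfl fun k _ => ?_
            rw [Finset.mul_sum]
            exact Finset.sum_congr rfl fun i _ => by ring
        _ = ∑ k, p k * x k := by
            refine Finset.sum_congr rfl fun k _ => ?_
            rw [hσ1, mul_one]
    · rw [Finset.mul_sum]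
      refine Finset.sum_congr rfl fun i _ => ?_
      rw [Finset.mul_sum]
  -- the stage-0 part
  have hstage0 : ∑ k, ∑ l, π (k, l) * (θ 0 * stagePay (s.1 k) (t.1 l) (G k l) 0)
      = θ 0 * ∑ i, ∑ k, p k * s.1 k [] i * GQ i k := by
    calc ∑ k, ∑ l, π (k, l) * (θ 0 * stagePay (s.1 k) (t.1 l) (G k l) 0)
        = ∑ k, θ 0 * ∑ l, π (k, l) * stagePay (s.1 k) (t.1 l) (G k l) 0 := by
          refine Finset.sum_congr rfl fun k _ => ?_
          rw [Finset.mul_sum]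
          exact Finset.sum_congr rfl fun l _ => by ring
      _ = θ 0 * ∑ k, ∑ l, π (k, l) * stagePay (s.1 k) (t.1 l) (G k l) 0 :=
          (Finset.mul_sum _ _ _).symm
      _ = θ 0 * ∑ k, ∑ i, p k * s.1 k [] i * GQ i k := by
          rw [Finset.sum_congr rfl fun k _ => hG0 k]
      _ = θ 0 * ∑ i, ∑ k, p k * s.1 k [] i * GQ i k := by
          rw [Finset.sum_comm]
  -- put everything together
  have hdistrib : ∑ k, ∑ l, π (k, l) *
        (θ 0 * stagePay (s.1 k) (t.1 l) (G k l) 0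
          + ∑ i, ∑ j, (s.1 k [] i * t.1 l [] j * (1 - θ 0)) * Bfun G θplus s t k l i j)
      = (∑ k, ∑ l, π (k, l) * (θ 0 * stagePay (s.1 k) (t.1 l) (G k l) 0))
        + ∑ k, ∑ l, π (k, l) *
            (∑ i, ∑ j, (s.1 k [] i * t.1 l [] j * (1 - θ 0)) * Bfun G θplus s t k l i j) := by
    rw [← Finset.sum_add_distrib]
    refine Finset.sum_congr rfl fun k _ => ?_
    rw [← Finset.sum_add_distrib]
    exact Finset.sum_congr rfl fun l _ => by ring
  rw [hdistrib, hstage0, hmain]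
  rw [Finset.sum_sub_distrib, mul_sub, hx]
  ring
end

section
/- Let π = p⊗Q with p∈Δ(K) and Q∈Δ(L)^K, let σ∈Δ(I)^K, τ∈Δ(J)^L, and let (i,j) satisfy P^π_{στ}(i,j)>0. Define p_{ij}∈ℝ^K by p_{ij}^k := P^π_{στ}(k|i)·P^π_{στ}(j|k)/P^π_{στ}(j|i) if P^π_{στ}(k|i)>0 and p_{ij}^k := 0 otherwise, and define Q_j∈Δ(L)^K by Q_j(ℓ|k) := Q(ℓ|k)τ^ℓ(j)/(Σ_{ℓ'}Q(ℓ'|k)τ^{ℓ'}(j)) if Σ_{ℓ'}Q(ℓ'|k)τ^{ℓ'}(j)>0 and Q_j(·|k) := Q(·|k) otherwise. Then p_{ij}∈Δ(K) and the conditional law satisfies π_{ij} = p_{ij}⊗Q_j, i.e. π_{ij}^{kℓ} = p_{ij}^k·Q_j(ℓ|k) for all (k,ℓ)∈K×L. -/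
open scoped BigOperators

/-- decomposition of the conditional law. If `π = p ⊗ Q` and
`P^π_{στ}(i,j) > 0`, then the conditional law `π_{ij}` of `(k,ℓ)` given `(i,j)`
decomposes as `π_{ij} = p_{ij} ⊗ Q_j`, where
`p_{ij}^k = P(k|i)·P(j|k)/P(j|i)` (set to `0` when `P(k|i) = 0`) and
`Q_j(ℓ|k) = Q(ℓ|k)τ^ℓ(j)/Σ_{ℓ'}Q(ℓ'|k)τ^{ℓ'}(j)` (set to `Q(·|k)` when the
denominator vanishes); moreover `p_{ij} ∈ Δ(K)`.  Here the conditionals of the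
joint law `P^π_{στ}(k,ℓ,i,j) = π^{kℓ}σ^k(i)τ^ℓ(j)` are written as quotients of
its marginals: `Pi i = P(i)`, `Pk k = P(k)`, `Pki k i = P(k|i)`,
`Pjk j k = P(j|k)`, `Pij i j = P(i,j)`. -/
theorem stmt_13
    {K L I J : Type*} [Fintype K] [Fintype L] [Fintype I] [Fintype J]
    [Nonempty K] [Nonempty L] [Nonempty I] [Nonempty J]
    (p : K → ℝ) (hp : p ∈ stdSimplex ℝ K)
    (Q : K → L → ℝ) (hQ : ∀ k, Q k ∈ stdSimplex ℝ L)
    (π : K × L → ℝ) (hπ : ∀ k l, π (k, l) = p k * Q k l)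
    (σ : K → I → ℝ) (hσ : ∀ k, σ k ∈ stdSimplex ℝ I)
    (τ : L → J → ℝ) (hτ : ∀ l, τ l ∈ stdSimplex ℝ J)
    (Pij : I → J → ℝ)
    (hPij : ∀ i j, Pij i j = ∑ k, ∑ l, π (k, l) * σ k i * τ l j)
    (Pi : I → ℝ)
    (hPi : ∀ i, Pi i = ∑ k, ∑ l, ∑ j, π (k, l) * σ k i * τ l j)
    (Pk : K → ℝ)
    (hPk : ∀ k, Pk k = ∑ l, ∑ i, ∑ j, π (k, l) * σ k i * τ l j)
    (Pki : K → I → ℝ)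
    (hPki : ∀ k i, Pki k i = (∑ l, ∑ j, π (k, l) * σ k i * τ l j) / Pi i)
    (Pjk : J → K → ℝ)
    (hPjk : ∀ j k, Pjk j k = (∑ l, ∑ i, π (k, l) * σ k i * τ l j) / Pk k)
    (i : I) (j : J) (hpos : 0 < Pij i j)
    (πij : K × L → ℝ)
    (hπij : ∀ kl, πij kl = π kl * σ kl.1 i * τ kl.2 j / Pij i j)
    (pij : K → ℝ)
    (hpij : ∀ k, pij k =
      if 0 < Pki k i then Pki k i * Pjk j k / (Pij i j / Pi i) else 0)
    (Qj : K → L → ℝ)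
    (hQj : ∀ k l, Qj k l =
      if 0 < ∑ l', Q k l' * τ l' j then
        Q k l * τ l j / ∑ l', Q k l' * τ l' j
      else Q k l) :
    pij ∈ stdSimplex ℝ K ∧ ∀ k l, πij (k, l) = pij k * Qj k l := by
  set S : K → ℝ := fun k => ∑ l', Q k l' * τ l' j with hS
  have hpnn : ∀ k, 0 ≤ p k := hp.1
  have hQnn : ∀ k l, 0 ≤ Q k l := fun k => (hQ k).1
  have hσnn : ∀ k i', 0 ≤ σ k i' := fun k => (hσ k).1
  have hτnn : ∀ l j', 0 ≤ τ l j' := fun l => (hτ l).1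
  have hSnn : ∀ k, 0 ≤ S k := fun k =>
    Finset.sum_nonneg fun l _ => mul_nonneg (hQnn k l) (hτnn l j)
  have hSle : ∀ k, S k ≤ 1 := by
    intro k
    calc S k ≤ ∑ l', Q k l' * 1 :=
          Finset.sum_le_sum fun l _ => by
            exact mul_le_mul_of_nonneg_left (Finset.single_le_sum (f := τ l)
              (fun j' _ => hτnn l j') (Finset.mem_univ j) |>.trans_eq (hτ l).2) (hQnn k l)
      _ = 1 := by simp [(hQ k).2]
  -- marginal computations
  have hPij' : Pij i j = ∑ k, p k * σ k i * S k := by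
    rw [hPij]
    refine Finset.sum_congr rfl fun k _ => ?_
    rw [hS, Finset.mul_sum]
    exact Finset.sum_congr rfl fun l _ => by rw [hπ]; ring
  have hPi' : Pi i = ∑ k, p k * σ k i := by
    rw [hPi]
    refine Finset.sum_congr rfl fun k _ => ?_
    have h1 : ∀ l, ∑ j', π (k, l) * σ k i * τ l j' = p k * σ k i * Q k l := by
      intro l
      rw [← Finset.mul_sum, (hτ l).2, mul_one, hπ]; ring
    simp_rw [h1]
    rw [← Finset.mul_sum, (hQ k).2, mul_one]
  have hPk' : ∀ k, Pk k = p k := by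
    intro k
    rw [hPk]
    have h1 : ∀ l i', ∑ j', π (k, l) * σ k i' * τ l j' = p k * Q k l * σ k i' := by
      intro l i'
      rw [← Finset.mul_sum, (hτ l).2, mul_one, hπ]
    have h2 : ∀ l, ∑ i', ∑ j', π (k, l) * σ k i' * τ l j' = p k * Q k l := by
      intro l
      simp_rw [h1, ← Finset.mul_sum, (hσ k).2, mul_one]
    simp_rw [h2, ← Finset.mul_sum, (hQ k).2, mul_one]
  have hPki' : ∀ k, Pki k i = p k * σ k i / Pi i := by
    intro k
    rw [hPki]
    congr 1
    have h1 : ∀ l, ∑ j', π (k, l) * σ k i * τ l j' = p k * σ k i * Q k l := by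
      intro l
      rw [← Finset.mul_sum, (hτ l).2, mul_one, hπ]; ring
    simp_rw [h1]
    rw [← Finset.mul_sum, (hQ k).2, mul_one]
  have hPjk' : ∀ k, Pjk j k = p k * S k / p k := by
    intro k
    rw [hPjk, hPk']
    congr 1
    have h1 : ∀ l, ∑ i', π (k, l) * σ k i' * τ l j = p k * (Q k l * τ l j) := by
      intro l
      have : ∀ i', π (k, l) * σ k i' * τ l j = (p k * Q k l * τ l j) * σ k i' := by
        intro i'; rw [hπ]; ring
      simp_rw [this]
      rw [← Finset.mul_sum, (hσ k).2]; ring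
    simp_rw [h1]
    rw [← Finset.mul_sum, hS]
  have hPipos : 0 < Pi i := by
    have : Pij i j ≤ Pi i := by
      rw [hPij', hPi']
      refine Finset.sum_le_sum fun k _ => ?_
      calc p k * σ k i * S k ≤ p k * σ k i * 1 :=
            mul_le_mul_of_nonneg_left (hSle k) (mul_nonneg (hpnn k) (hσnn k i))
        _ = p k * σ k i := mul_one _
    linarith
  -- key formula for pij
  have hkey : ∀ k, pij k = p k * σ k i * S k / Pij i j := by
    intro k
    rw [hpij, hPki', hPjk']
    rcases eq_or_lt_of_le (mul_nonneg (hpnn k) (hσnn k i)) with h0 | h0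
    · rw [if_neg (by rw [← h0, zero_div]; exact lt_irrefl 0), ← h0, zero_mul, zero_div]
    · have hppos : 0 < p k := by
        rcases (hpnn k).lt_or_eq with h | h
        · exact h
        · exfalso; rw [← h, zero_mul] at h0; exact lt_irrefl 0 h0
      rw [if_pos (div_pos h0 hPipos)]
      have h1 : p k ≠ 0 := hppos.ne'
      have h2 : Pi i ≠ 0 := hPipos.ne'
      have h3 : Pij i j ≠ 0 := hpos.ne'
      field_simp
      try ring
  constructor
  · constructor
    · intro k
      rw [hkey]
      exact div_nonneg (mul_nonneg (mul_nonneg (hpnn k) (hσnn k i)) (hSnn k)) hpos.le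
    · simp_rw [hkey]
      rw [← Finset.sum_div, ← hPij', div_self hpos.ne']
  · intro k l
    rw [hπij, hkey, hQj, hπ]
    rcases eq_or_lt_of_le (hSnn k) with h0 | h0
    · have hterm : Q k l * τ l j = 0 := by
        have := (Finset.sum_eq_zero_iff_of_nonneg
          (fun l' _ => mul_nonneg (hQnn k l') (hτnn l' j))).mp h0.symm l (Finset.mem_univ l)
        exact this
      rw [if_neg (show ¬ (0:ℝ) < ∑ l', Q k l' * τ l' j from by
        rw [show (∑ l', Q k l' * τ l' j) = S k from rfl, ← h0]; exact lt_irrefl 0)]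
      have : p k * Q k l * σ k i * τ l j = 0 := by
        have : p k * Q k l * σ k i * τ l j = (Q k l * τ l j) * (p k * σ k i) := by ring
        rw [this, hterm, zero_mul]
      rw [this, zero_div, ← h0]
      ring
    · rw [if_pos (show (0:ℝ) < ∑ l', Q k l' * τ l' j from h0)]
      rw [show (∑ l', Q k l' * τ l' j) = S k from rfl]
      have h1 : S k ≠ 0 := h0.ne'
      have h3 : Pij i j ≠ 0 := hpos.ne'
      field_simp
      try ring
end

section
/- Let π = p⊗Q with p∈Δ(K) and Q∈Δ(L)^K, let σ∈Δ(I)^K, τ∈Δ(J)^L be first-stage strategies, and let (i,j) satisfy P^π_{στ}(i,j)>0. Then for every pair of strategies (ŝ,t̂), every evaluation θ and every ζ∈ℝ^K: P^π_{στ}(j|i)·γ_θ(π_{ij}, ŝ, t̂; ζ) = γ_θ(p_i⊗Q_j, ŝ, t̂; ζ_j), where p_i := (P^π_{στ}(k|i))_{k∈K}∈Δ(K), Q_j(ℓ|k) := Q(ℓ|k)τ^ℓ(j)/P^Q_τ(j|k) if P^Q_τ(j|k)>0 and Q_j(·|k) := Q(·|k) otherwise, P^Q_τ(j|k) := Σ_ℓ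 Q(ℓ|k)τ^ℓ(j), and ζ_j^k := ζ^k·P^Q_τ(j|k). -/
open scoped BigOperators

/-- the key technical lemma. If `π = p ⊗ Q` and
`P^π_{στ}(i,j) > 0`, then for all strategies `(ŝ,t̂)`, every evaluation `θ`
and every `ζ ∈ ℝ^K`:
`P^π_{στ}(j|i) · γ_θ(π_{ij}, ŝ, t̂; ζ) = γ_θ(p_i ⊗ Q_j, ŝ, t̂; ζ_j)`,
where `p_i = (P^π_{στ}(k|i))_k`, `P^Q_τ(j|k) = Σ_ℓ Q(ℓ|k)τ^ℓ(j)`,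
`Q_j(ℓ|k) = Q(ℓ|k)τ^ℓ(j)/P^Q_τ(j|k)` (with fallback `Q(·|k)` when
`P^Q_τ(j|k) = 0`) and `ζ_j^k = ζ^k·P^Q_τ(j|k)`.
Here `P^π_{στ}(j|i) = Pij i j / Pi i`. -/
theorem stmt_14
    {K L I J : Type*} [Fintype K] [Fintype L] [Fintype I] [Fintype J]
    [Nonempty K] [Nonempty L] [Nonempty I] [Nonempty J]
    (G : K → L → I → J → ℝ)
    (θ : ℕ → ℝ) (hθ0 : ∀ m, 0 ≤ θ m) (hθ1 : HasSum θ 1)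
    (ζ : K → ℝ)
    (p : K → ℝ) (hp : p ∈ stdSimplex ℝ K)
    (Q : K → L → ℝ) (hQ : ∀ k, Q k ∈ stdSimplex ℝ L)
    (π : K × L → ℝ) (hπ : ∀ k l, π (k, l) = p k * Q k l)
    (σ : K → I → ℝ) (hσ : ∀ k, σ k ∈ stdSimplex ℝ I)
    (τ : L → J → ℝ) (hτ : ∀ l, τ l ∈ stdSimplex ℝ J)
    (Pij : I → J → ℝ)
    (hPij : ∀ i j, Pij i j = ∑ k, ∑ l, π (k, l) * σ k i * τ l j)
    (Pi : I → ℝ)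
    (hPi : ∀ i, Pi i = ∑ k, ∑ l, ∑ j, π (k, l) * σ k i * τ l j)
    (pi : I → K → ℝ)
    (hpi : ∀ i k, pi i k = (∑ l, ∑ j, π (k, l) * σ k i * τ l j) / Pi i)
    (PQ : J → K → ℝ)
    (hPQ : ∀ j k, PQ j k = ∑ l, Q k l * τ l j)
    (Qj : J → K → L → ℝ)
    (hQj : ∀ j k l, Qj j k l =
      if 0 < PQ j k then Q k l * τ l j / PQ j k else Q k l)
    (ζj : J → K → ℝ)
    (hζj : ∀ j k, ζj j k = ζ k * PQ j k)
    (i : I) (j : J) (hpos : 0 < Pij i j)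
    (πij : K × L → ℝ)
    (hπij : ∀ kl, πij kl = π kl * σ kl.1 i * τ kl.2 j / Pij i j)
    (s : Strat I J K I) (t : Strat I J L J) :
    (Pij i j / Pi i) * payA θ G πij ζ s t =
      payA θ G (fun kl => pi i kl.1 * Qj j kl.1 kl.2) (ζj j) s t := by

  have hPijne : Pij i j ≠ 0 := ne_of_gt hpos
  -- Pi i is positive
  have hPij_nonneg : ∀ j', 0 ≤ Pij i j' := by
    intro j'
    rw [hPij]
    refine Finset.sum_nonneg fun k _ => Finset.sum_nonneg fun l _ => ?_
    rw [hπ]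
    exact mul_nonneg (mul_nonneg (mul_nonneg (hp.1 k) ((hQ k).1 l)) ((hσ k).1 i))
      ((hτ l).1 j')
  have hPi_eq : Pi i = ∑ j', Pij i j' := by
    calc Pi i = ∑ k, ∑ l, ∑ j', π (k, l) * σ k i * τ l j' := hPi i
    _ = ∑ k, ∑ j', ∑ l, π (k, l) * σ k i * τ l j' :=
        Finset.sum_congr rfl fun k _ => Finset.sum_comm
    _ = ∑ j', ∑ k, ∑ l, π (k, l) * σ k i * τ l j' := Finset.sum_comm
    _ = ∑ j', Pij i j' := by simp_rw [hPij]
  have hPipos : 0 < Pi i := by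
    rw [hPi_eq]
    have := Finset.single_le_sum (f := fun j' => Pij i j')
      (fun j' _ => hPij_nonneg j') (Finset.mem_univ j)
    linarith
  have hPine : Pi i ≠ 0 := ne_of_gt hPipos
  unfold payA
  rw [Finset.mul_sum]
  refine Finset.sum_congr rfl fun k _ => ?_
  rw [Finset.mul_sum]
  refine Finset.sum_congr rfl fun l _ => ?_
  set S := ∑' m : ℕ, θ m * stagePay (s.1 k) (t.1 l) (G k l) m with hS
  have hQjPQ : Qj j k l * PQ j k = Q k l * τ l j := by
    rcases lt_or_ge 0 (PQ j k) with h | h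
    · rw [hQj, if_pos h, div_mul_cancel₀ _ (ne_of_gt h)]
    · have hnn : ∀ l' ∈ Finset.univ, (0:ℝ) ≤ Q k l' * τ l' j :=
        fun l' _ => mul_nonneg ((hQ k).1 l') ((hτ l').1 j)
      have hPQ0 : PQ j k = 0 := by
        have h0 : 0 ≤ PQ j k := by rw [hPQ]; exact Finset.sum_nonneg hnn
        linarith
      have hterm : Q k l * τ l j = 0 := by
        have := (Finset.sum_eq_zero_iff_of_nonneg hnn).mp (by rw [← hPQ j k]; exact hPQ0)
        exact this l (Finset.mem_univ l)
      rw [hPQ0, mul_zero, hterm]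
  have hpik : pi i k = p k * σ k i / Pi i := by
    rw [hpi]
    congr 1
    have h1 : ∀ l', ∑ j', π (k, l') * σ k i * τ l' j' = p k * Q k l' * σ k i := by
      intro l'
      rw [← Finset.mul_sum, (hτ l').2, mul_one, hπ]
    simp_rw [h1]
    rw [← Finset.sum_mul, ← Finset.mul_sum, (hQ k).2, mul_one]
  have hrhs : pi i k * Qj j k l * (ζj j k) = (p k * σ k i / Pi i) * (Q k l * τ l j) * ζ k := by
    rw [hpik, hζj, ← hQjPQ]; ring
  rw [hrhs, hπij, hπ]
  field_simp
end

section
/- Assume θ_1 < 1 and write w_θ(x,Q) := w_θ(x,Q;𝟏) with 𝟏=(1,…,1)∈ℝ^K. Then for all x∈ℝ^K, Q∈Δ(L)^K and every non-revealing mixed action τ̄∈Δ(J): w_θ(x,Q) ≤ (1−θ_1)·max_{i∈I} w_{θ^+}( (x − θ_1·G^Q_{iτ̄})/(1−θ_1), Q ), where G^{k,Q}_{iτ̄} := Σ_{ℓ,j} Q(ℓ|k)τ̄(j)G^{kℓ}(i,j). -/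
open scoped BigOperators

section Aux
open scoped BigOperators
variable {I J : Type*} [Fintype I] [Fintype J]

lemma sum_ofFn_succ {α : Type*} [Fintype α] (F : List α → ℝ) (m : ℕ) :
    ∑ h : Fin (m+1) → α, F (List.ofFn h)
      = ∑ a : α, ∑ h : Fin m → α, F (a :: List.ofFn h) := by
  rw [← Equiv.sum_comp (Fin.consEquiv (fun _ : Fin (m+1) => α))
    (fun h => F (List.ofFn h)), Fintype.sum_prod_type]
  refine Finset.sum_congr rfl fun a _ => Finset.sum_congr rfl fun h _ => ?_
  simp [Fin.consEquiv, List.ofFn_succ]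

lemma probH_nonneg (s : List (I × J) → I → ℝ) (t : List (I × J) → J → ℝ)
    (hs : ∀ h i, 0 ≤ s h i) (ht : ∀ h j, 0 ≤ t h j) :
    ∀ h, 0 ≤ probH s t h := by
  intro h
  induction h generalizing s t with
  | nil => simp [probH]
  | cons a h ih =>
      have := ih (fun h' => s (a :: h')) (fun h' => t (a :: h'))
        (fun h' i => hs _ i) (fun h' j => ht _ j)
      have h1 := hs [] a.1
      have h2 := ht [] a.2
      simp only [probH]
      positivity

lemma stagePay_succ (s : List (I × J) → I → ℝ) (t : List (I × J) → J → ℝ)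
    (g : I → J → ℝ) (m : ℕ) :
    stagePay s t g (m+1) = ∑ a : I × J, s [] a.1 * t [] a.2 *
      stagePay (fun h => s (a :: h)) (fun h => t (a :: h)) g m := by
  unfold stagePay
  rw [sum_ofFn_succ (fun h => probH s t h * ∑ i, ∑ j, s h i * t h j * g i j)]
  refine Finset.sum_congr rfl fun a _ => ?_
  rw [Finset.mul_sum]
  refine Finset.sum_congr rfl fun h _ => ?_
  simp only [probH]
  ring

lemma sum_probH (s : List (I × J) → I → ℝ) (t : List (I × J) → J → ℝ)
    (hs : ∀ h, ∑ i, s h i = 1) (ht : ∀ h, ∑ j, t h j = 1) (m : ℕ) :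
    ∑ h : Fin m → I × J, probH s t (List.ofFn h) = 1 := by
  induction m generalizing s t with
  | zero => simp [probH, List.ofFn_zero]
  | succ m ih =>
      rw [sum_ofFn_succ (fun h => probH s t h)]
      have : ∀ a : I × J, ∑ h : Fin m → I × J, probH s t (a :: List.ofFn h)
          = s [] a.1 * t [] a.2 := by
        intro a
        simp only [probH]
        rw [← Finset.mul_sum, ih (fun h' => s (a :: h')) (fun h' => t (a :: h'))
          (fun h' => hs _) (fun h' => ht _), mul_one]
      rw [Finset.sum_congr rfl fun a _ => this a, Fintype.sum_prod_type]
      simp only [← Finset.sum_mul, hs, ← Finset.mul_sum, ht]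
      simp [hs []]

end Aux
section Aux2
open scoped BigOperators
variable {I J : Type*} [Fintype I] [Fintype J] [Nonempty I] [Nonempty J]

lemma abs_stagePay_le (s : List (I × J) → I → ℝ) (t : List (I × J) → J → ℝ)
    (hs : ∀ h, s h ∈ stdSimplex ℝ I) (ht : ∀ h, t h ∈ stdSimplex ℝ J)
    {g : I → J → ℝ} {C : ℝ} (hC : ∀ i j, |g i j| ≤ C) (m : ℕ) :
    |stagePay s t g m| ≤ C := by
  have hC0 : 0 ≤ C := le_trans (abs_nonneg _) (hC Classical.ofNonempty Classical.ofNonempty)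
  have hinner : ∀ h, |∑ i, ∑ j, s h i * t h j * g i j| ≤ C := by
    intro h
    calc |∑ i, ∑ j, s h i * t h j * g i j|
        ≤ ∑ i, ∑ j, |s h i * t h j * g i j| := by
          refine le_trans (Finset.abs_sum_le_sum_abs _ _) ?_
          exact Finset.sum_le_sum fun i _ => Finset.abs_sum_le_sum_abs _ _
      _ ≤ ∑ i, ∑ j, s h i * t h j * C := by
          refine Finset.sum_le_sum fun i _ => Finset.sum_le_sum fun j _ => ?_
          rw [abs_mul, abs_mul, abs_of_nonneg ((hs h).1 i), abs_of_nonneg ((ht h).1 j)]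
          exact mul_le_mul_of_nonneg_left (hC i j)
            (mul_nonneg ((hs h).1 i) ((ht h).1 j))
      _ = C := by
          simp only [← Finset.sum_mul, ← Finset.mul_sum, (ht h).2]
          rw [(hs h).2]; ring
  calc |stagePay s t g m|
      ≤ ∑ h : Fin m → I × J, |probH s t (List.ofFn h) *
          ∑ i, ∑ j, s (List.ofFn h) i * t (List.ofFn h) j * g i j| :=
        Finset.abs_sum_le_sum_abs _ _
    _ ≤ ∑ h : Fin m → I × J, probH s t (List.ofFn h) * C := by
        refine Finset.sum_le_sum fun h _ => ?_
        rw [abs_mul, abs_of_nonneg (probH_nonneg s t (fun h i => (hs h).1 i)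
          (fun h j => (ht h).1 j) _)]
        exact mul_le_mul_of_nonneg_left (hinner _)
          (probH_nonneg s t (fun h i => (hs h).1 i) (fun h j => (ht h).1 j) _)
    _ = C := by
        rw [← Finset.sum_mul, sum_probH s t (fun h => (hs h).2) (fun h => (ht h).2),
          one_mul]

lemma summable_theta_stage {θ' : ℕ → ℝ} (hpos : ∀ m, 0 ≤ θ' m) (hsum : Summable θ')
    (s : List (I × J) → I → ℝ) (t : List (I × J) → J → ℝ)
    (hs : ∀ h, s h ∈ stdSimplex ℝ I) (ht : ∀ h, t h ∈ stdSimplex ℝ J)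
    {g : I → J → ℝ} {C : ℝ} (hC : ∀ i j, |g i j| ≤ C) :
    Summable (fun m => θ' m * stagePay s t g m) := by
  refine Summable.of_abs (Summable.of_nonneg_of_le (fun m => abs_nonneg _)
    (fun m => ?_) (hsum.mul_right C))
  rw [abs_mul, abs_of_nonneg (hpos m)]
  exact mul_le_mul_of_nonneg_left (abs_stagePay_le s t hs ht hC m) (hpos m)

lemma abs_tsum_theta_stage_le {θ' : ℕ → ℝ} (hpos : ∀ m, 0 ≤ θ' m)
    (hsum : HasSum θ' 1)
    (s : List (I × J) → I → ℝ) (t : List (I × J) → J → ℝ)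
    (hs : ∀ h, s h ∈ stdSimplex ℝ I) (ht : ∀ h, t h ∈ stdSimplex ℝ J)
    {g : I → J → ℝ} {C : ℝ} (hC : ∀ i j, |g i j| ≤ C) :
    |∑' m, θ' m * stagePay s t g m| ≤ C := by
  have hsummable : Summable (fun m => θ' m * stagePay s t g m) :=
    summable_theta_stage hpos hsum.summable s t hs ht hC
  have hle : ∀ m, |θ' m * stagePay s t g m| ≤ θ' m * C := fun m => by
    rw [abs_mul, abs_of_nonneg (hpos m)]
    exact mul_le_mul_of_nonneg_left (abs_stagePay_le s t hs ht hC m) (hpos m)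
  have h1 : |∑' m, θ' m * stagePay s t g m| ≤ ∑' m, |θ' m * stagePay s t g m| := by
    have := norm_tsum_le_tsum_norm (f := fun m => θ' m * stagePay s t g m)
      (by simp only [Real.norm_eq_abs]; exact hsummable.abs)
    simpa only [Real.norm_eq_abs] using this
  have h2 : ∑' m, |θ' m * stagePay s t g m| ≤ ∑' m, θ' m * C :=
    Summable.tsum_le_tsum hle hsummable.abs (hsum.summable.mul_right C)
  have h3 : ∑' m, θ' m * C = C := by rw [tsum_mul_right, hsum.tsum_eq, one_mul]
  linarith

end Aux2
section Aux3
open scoped BigOperators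
variable {I J : Type*} [Fintype I] [Fintype J] [Nonempty I] [Nonempty J]

lemma stagePay_zero (s : List (I × J) → I → ℝ) (t : List (I × J) → J → ℝ)
    (g : I → J → ℝ) :
    stagePay s t g 0 = ∑ i, ∑ j, s [] i * t [] j * g i j := by
  rw [stagePay]
  rw [Finset.sum_eq_single_of_mem (fun _ : Fin 0 => Classical.ofNonempty)
    (Finset.mem_univ _)]
  · simp [probH, List.ofFn_zero]
  · intro b _ hb
    exact absurd (funext fun i => i.elim0) hb

lemma tsum_theta_stage_rec {θ' : ℕ → ℝ} (hpos : ∀ m, 0 ≤ θ' m)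
    (hsum : Summable θ')
    (s : List (I × J) → I → ℝ) (t : List (I × J) → J → ℝ)
    (hs : ∀ h, s h ∈ stdSimplex ℝ I) (ht : ∀ h, t h ∈ stdSimplex ℝ J)
    {g : I → J → ℝ} {C : ℝ} (hC : ∀ i j, |g i j| ≤ C) :
    ∑' m, θ' m * stagePay s t g m
      = θ' 0 * (∑ i, ∑ j, s [] i * t [] j * g i j)
        + ∑ a : I × J, s [] a.1 * t [] a.2 *
            ∑' m, θ' (m+1) *
              stagePay (fun h => s (a :: h)) (fun h => t (a :: h)) g m := by
  have hshift : Summable (fun m => θ' (m + 1)) := (summable_nat_add_iff 1).2 hsum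
  have hsummand : ∀ a : I × J,
      Summable (fun m => θ' (m+1) *
        stagePay (fun h => s (a :: h)) (fun h => t (a :: h)) g m) := fun a =>
    summable_theta_stage (fun m => hpos (m+1)) hshift _ _
      (fun h => hs _) (fun h => ht _) hC
  rw [Summable.tsum_eq_zero_add (summable_theta_stage hpos hsum s t hs ht hC)]
  rw [stagePay_zero]
  congr 1
  have : ∀ m : ℕ, θ' (m + 1) * stagePay s t g (m + 1)
      = ∑ a : I × J, s [] a.1 * t [] a.2 *
          (θ' (m+1) * stagePay (fun h => s (a :: h)) (fun h => t (a :: h)) g m) := by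
    intro m
    rw [stagePay_succ, Finset.mul_sum]
    exact Finset.sum_congr rfl fun a _ => by ring
  rw [tsum_congr this, Summable.tsum_finsetSum (fun a _ => ((hsummand a).mul_left _))]
  exact Finset.sum_congr rfl fun a _ => (tsum_mul_left)

end Aux3
section Aux4
open scoped BigOperators
variable {I J K L : Type*} [Fintype I] [Fintype J] [Fintype K] [Fintype L]
  [Nonempty I] [Nonempty J] [Nonempty K] [Nonempty L]

lemma payA_smul (θ' : ℕ → ℝ) (G : K → L → I → J → ℝ) (π : K × L → ℝ)
    (ζ : K → ℝ) (c : ℝ) (s : Strat I J K I) (t : Strat I J L J) :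
    payA θ' G (fun kl => c * π kl) ζ s t = c * payA θ' G π ζ s t := by
  unfold payA
  rw [Finset.mul_sum]
  refine Finset.sum_congr rfl fun k _ => ?_
  rw [Finset.mul_sum]
  exact Finset.sum_congr rfl fun l _ => by ring

lemma abs_hDual_le {θ' : ℕ → ℝ} (hpos : ∀ m, 0 ≤ θ' m) (hsum : HasSum θ' 1)
    (G : K → L → I → J → ℝ) {C : ℝ} (hC : ∀ k l i j, |G k l i j| ≤ C)
    (x : K → ℝ) (Q : K → L → ℝ) (hQ : ∀ k, Q k ∈ stdSimplex ℝ L)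
    {p : K → ℝ} (hp : p ∈ stdSimplex ℝ K)
    (s : Strat I J K I) (t : Strat I J L J) :
    |hDual θ' G x Q (fun _ => 1) p s t| ≤ C + ∑ k, |x k| := by
  have hpay : |payA θ' G (fun kl => p kl.1 * Q kl.1 kl.2) (fun _ => 1) s t| ≤ C := by
    unfold payA
    calc |∑ k, ∑ l, p k * Q k l * 1 * ∑' m, θ' m * stagePay (s.1 k) (t.1 l) (G k l) m|
        ≤ ∑ k, ∑ l, |p k * Q k l * 1 * ∑' m, θ' m * stagePay (s.1 k) (t.1 l) (G k l) m| := by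
          refine le_trans (Finset.abs_sum_le_sum_abs _ _) ?_
          exact Finset.sum_le_sum fun k _ => Finset.abs_sum_le_sum_abs _ _
      _ ≤ ∑ k, ∑ l, p k * Q k l * C := by
          refine Finset.sum_le_sum fun k _ => Finset.sum_le_sum fun l _ => ?_
          rw [mul_one, abs_mul, abs_mul, abs_of_nonneg (hp.1 k),
            abs_of_nonneg ((hQ k).1 l)]
          refine mul_le_mul_of_nonneg_left ?_ (mul_nonneg (hp.1 k) ((hQ k).1 l))
          exact abs_tsum_theta_stage_le hpos hsum (s.1 k) (t.1 l)
            (s.2 k) (t.2 l) (hC k l)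
      _ = C := by
          simp only [← Finset.sum_mul, ← Finset.mul_sum, (hQ _).2]
          simp only [mul_one]
          rw [hp.2, one_mul]
    
  have hx : |∑ k, p k * x k| ≤ ∑ k, |x k| := by
    refine le_trans (Finset.abs_sum_le_sum_abs _ _) (Finset.sum_le_sum fun k _ => ?_)
    rw [abs_mul, abs_of_nonneg (hp.1 k)]
    calc p k * |x k| ≤ 1 * |x k| := by
          refine mul_le_mul_of_nonneg_right ?_ (abs_nonneg _)
          rw [← hp.2]
          exact Finset.single_le_sum (fun k _ => hp.1 k) (Finset.mem_univ k)
      _ = |x k| := one_mul _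
  calc |hDual θ' G x Q (fun _ => 1) p s t| ≤ _ + _ := abs_sub _ _
    _ ≤ C + ∑ k, |x k| := add_le_add hpay hx

end Aux4

section Aux5
lemma sum_comm4 {A B C D : Type*} [Fintype A] [Fintype B] [Fintype C] [Fintype D]
    (f : A → B → C → D → ℝ) :
    ∑ a, ∑ b, ∑ c, ∑ d, f a b c d = ∑ c, ∑ d, ∑ a, ∑ b, f a b c d := by
  calc ∑ a, ∑ b, ∑ c, ∑ d, f a b c d
      = ∑ a, ∑ c, ∑ b, ∑ d, f a b c d :=
        Finset.sum_congr rfl fun a _ => Finset.sum_comm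
    _ = ∑ c, ∑ a, ∑ b, ∑ d, f a b c d := Finset.sum_comm
    _ = ∑ c, ∑ a, ∑ d, ∑ b, f a b c d :=
        Finset.sum_congr rfl fun c _ => Finset.sum_congr rfl fun a _ =>
          Finset.sum_comm
    _ = ∑ c, ∑ d, ∑ a, ∑ b, f a b c d :=
        Finset.sum_congr rfl fun c _ => Finset.sum_comm
end Aux5

section Aux6
lemma sum_comm4' {A B C D : Type*} [Fintype A] [Fintype B] [Fintype C] [Fintype D]
    (f : A → B → C → D → ℝ) :
    ∑ a, ∑ b, ∑ c, ∑ d, f a b c d = ∑ c, ∑ a, ∑ b, ∑ d, f a b c d := by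
  calc ∑ a, ∑ b, ∑ c, ∑ d, f a b c d
      = ∑ a, ∑ c, ∑ b, ∑ d, f a b c d :=
        Finset.sum_congr rfl fun a _ => Finset.sum_comm
    _ = ∑ c, ∑ a, ∑ b, ∑ d, f a b c d := Finset.sum_comm
end Aux6

/-- sub-recursive inequality for non-revealing play. Writing
`w_θ(x,Q) = w_θ(x,Q;𝟏)`, for every mixed action `τ̄ ∈ Δ(J)`:
`w_θ(x,Q) ≤ (1−θ_1)·max_{i∈I} w_{θ⁺}((x−θ_1G^Q_{iτ̄})/(1−θ_1), Q)`.
Stages are indexed from `0` (so `θ 0 = θ_1`); the value of the dual game is its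
minmax `wPlus`; the max over the finite set `I` is written as a supremum. -/
theorem stmt_16
    {K L I J : Type*} [Fintype K] [Fintype L] [Fintype I] [Fintype J]
    [Nonempty K] [Nonempty L] [Nonempty I] [Nonempty J]
    (G : K → L → I → J → ℝ)
    (θ : ℕ → ℝ) (hθ0 : ∀ m, 0 ≤ θ m) (hθ1 : HasSum θ 1) (hθlt : θ 0 < 1)
    (θplus : ℕ → ℝ) (hθplus : ∀ m, θplus m = θ (m + 1) / (1 - θ 0))
    (x : K → ℝ) (Q : K → L → ℝ) (hQ : ∀ k, Q k ∈ stdSimplex ℝ L)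
    (τbar : J → ℝ) (hτbar : τbar ∈ stdSimplex ℝ J)
    (GQ : I → K → ℝ)
    (hGQ : ∀ i k, GQ i k = ∑ l, ∑ j, Q k l * τbar j * G k l i j) :
    wPlus (I := I) (J := J) θ G x Q (fun _ => 1) ≤
      (1 - θ 0) *
        ⨆ i : I, wPlus θplus G
          (fun k => (x k - θ 0 * GQ i k) / (1 - θ 0)) Q (fun _ => 1) := by
  classical
  haveI : Nonempty (stdSimplex ℝ K) :=
    ⟨⟨Pi.single Classical.ofNonempty 1, single_mem_stdSimplex ℝ _⟩⟩
  obtain ⟨C, hC⟩ := Finite.exists_le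
    (fun q : K × L × I × J => |G q.1 q.2.1 q.2.2.1 q.2.2.2|)
  have hC' : ∀ k l i j, |G k l i j| ≤ C := fun k l i j => hC (k, l, i, j)
  have h1θ : (0:ℝ) < 1 - θ 0 := sub_pos.2 hθlt
  -- facts about θplus
  have hθp0 : ∀ m, 0 ≤ θplus m := fun m => by
    rw [hθplus]; exact div_nonneg (hθ0 _) h1θ.le
  have hshift : HasSum (fun n => θ (n + 1)) (1 - θ 0) := by
    rw [hasSum_nat_add_iff 1]
    simpa using hθ1
  have hθp1 : HasSum θplus 1 := by
    have h := hshift.div_const (1 - θ 0)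
    have : (1 - θ 0) / (1 - θ 0) = 1 := div_self h1θ.ne'
    rw [this] at h
    refine HasSum.congr_fun h fun m => hθplus m
  have hθrel : ∀ m, θ (m + 1) = (1 - θ 0) * θplus m := fun m => by
    rw [hθplus, mul_div_cancel₀ _ h1θ.ne']
  -- shorthand
  set X : I → K → ℝ := fun i k => (x k - θ 0 * GQ i k) / (1 - θ 0) with hXdef
  have hX : ∀ i k, (1 - θ 0) * X i k = x k - θ 0 * GQ i k := fun i k =>
    mul_div_cancel₀ _ h1θ.ne'
  set W : ℝ := ⨆ i : I, wPlus θplus G (X i) Q (fun _ => 1) with hWdef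
  -- boundedness of hDual-sups
  have hBddA : ∀ (x' : K → ℝ) (t : Strat I J L J), BddAbove (Set.range
      fun ps : stdSimplex ℝ K × Strat I J K I =>
        hDual θplus G x' Q (fun _ => 1) (ps.1 : K → ℝ) ps.2 t) := by
    intro x' t
    refine ⟨C + ∑ k, |x' k|, ?_⟩
    rintro _ ⟨ps, rfl⟩
    exact (abs_le.1 (abs_hDual_le hθp0 hθp1 G hC' x' Q hQ ps.1.2 ps.2 t)).2
  have hBddA0 : ∀ t : Strat I J L J, BddAbove (Set.range
      fun ps : stdSimplex ℝ K × Strat I J K I =>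
        hDual θ G x Q (fun _ => 1) (ps.1 : K → ℝ) ps.2 t) := by
    intro t
    refine ⟨C + ∑ k, |x k|, ?_⟩
    rintro _ ⟨ps, rfl⟩
    exact (abs_le.1 (abs_hDual_le hθ0 hθ1 G hC' x Q hQ ps.1.2 ps.2 t)).2
  -- the W-bound for each i (finite sup)
  have hWle : ∀ i, wPlus θplus G (X i) Q (fun _ => 1) ≤ W :=
    fun i => le_ciSup (f := fun i => wPlus θplus G (X i) Q (fun _ => 1))
      (Set.Finite.bddAbove (Set.finite_range _)) i
  refine le_of_forall_pos_le_add fun ε hε => ?_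
  set δ : ℝ := ε / (1 - θ 0) with hδdef
  have hδpos : 0 < δ := div_pos hε h1θ
  -- choose ε-optimal strategies for player 2 in the shifted dual games
  have hex : ∀ i : I, ∃ t : Strat I J L J,
      (⨆ ps : stdSimplex ℝ K × Strat I J K I,
        hDual θplus G (X i) Q (fun _ => 1) (ps.1 : K → ℝ) ps.2 t)
        < wPlus θplus G (X i) Q (fun _ => 1) + δ := by
    intro i
    exact exists_lt_of_ciInf_lt (lt_add_of_pos_right _ hδpos)
  choose T hT using hex
  -- the combined strategy of player 2
  set Tstar : Strat I J L J := ⟨fun l h => match h with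
      | [] => τbar
      | a :: h' => (T a.1).1 l h', by
    intro l h
    match h with
    | [] => exact hτbar
    | a :: h' => exact (T a.1).2 l h'⟩ with hTstar
  have key : ∀ ps : stdSimplex ℝ K × Strat I J K I,
      hDual θ G x Q (fun _ => 1) (ps.1 : K → ℝ) ps.2 Tstar
        ≤ (1 - θ 0) * (W + δ) := by
    rintro ⟨⟨p, hp⟩, s⟩
    -- continuation strategies of player 1 after first-stage actions (i,j)
    set scont : I → J → Strat I J K I := fun i j =>
      ⟨fun k h => s.1 k ((i, j) :: h), fun k h => s.2 k _⟩ with hscont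
    set sk : K → I → ℝ := fun k i => s.1 k [] i with hsk
    set q : I → K → ℝ := fun i k => p k * sk k i with hqdef
    have hq0 : ∀ i k, 0 ≤ q i k := fun i k =>
      mul_nonneg (hp.1 k) ((s.2 k []).1 i)
    set P : I → J → ℝ := fun i j =>
      payA θplus G (fun kl => q i kl.1 * Q kl.1 kl.2) (fun _ => 1)
        (scont i j) (T i) with hPdef
    set Bf : K → L → I → J → ℝ := fun k l i j =>
      ∑' m, θplus m * stagePay ((scont i j).1 k) ((T i).1 l) (G k l) m with hBf
    have hP : ∀ i j, P i j = ∑ k, ∑ l, q i k * Q k l * Bf k l i j := by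
      intro i j
      rw [hPdef]
      unfold payA
      exact Finset.sum_congr rfl fun k _ => Finset.sum_congr rfl fun l _ => by
        rw [mul_one]
    -- per-(k,l) recursive decomposition of the θ-weighted payoff
    have hkl : ∀ k l, ∑' m, θ m * stagePay (s.1 k) (Tstar.1 l) (G k l) m
        = θ 0 * (∑ i, ∑ j, sk k i * τbar j * G k l i j)
          + ∑ i, ∑ j, sk k i * τbar j * ((1 - θ 0) * Bf k l i j) := by
      intro k l
      rw [tsum_theta_stage_rec hθ0 hθ1.summable (s.1 k) (Tstar.1 l)
        (s.2 k) (Tstar.2 l) (hC' k l)]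
      congr 1
      rw [Fintype.sum_prod_type]
      refine Finset.sum_congr rfl fun i _ => Finset.sum_congr rfl fun j _ => ?_
      have h2 : ∑' m, θ (m + 1) *
            stagePay (fun h => s.1 k ((i, j) :: h))
              (fun h => Tstar.1 l ((i, j) :: h)) (G k l) m
          = (1 - θ 0) * Bf k l i j := by
        rw [hBf, ← tsum_mul_left]
        refine tsum_congr fun m => ?_
        rw [hθrel m, mul_assoc]
      rw [h2]
    -- decomposition of the dual payoff
    have hdecomp : hDual θ G x Q (fun _ => 1) p s Tstar
        = ∑ i, ∑ j, τbar j *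
            ((1 - θ 0) * (P i j - ∑ k, q i k * X i k)) := by
      have hdual1 : hDual θ G x Q (fun _ => 1) p s Tstar
          = ∑ k, ∑ l, p k * Q k l *
              (∑' m, θ m * stagePay (s.1 k) (Tstar.1 l) (G k l) m)
            - ∑ k, p k * x k := by
        unfold hDual payA
        congr 1
        exact Finset.sum_congr rfl fun k _ => Finset.sum_congr rfl fun l _ => by
          rw [mul_one]
      rw [hdual1]
      -- Term 1 : first-stage payoff
      have hterm1 : ∑ k, ∑ l, p k * Q k l *
            (θ 0 * (∑ i, ∑ j, sk k i * τbar j * G k l i j))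
          = θ 0 * ∑ i, ∑ k, q i k * GQ i k := by
        calc ∑ k, ∑ l, p k * Q k l *
              (θ 0 * (∑ i, ∑ j, sk k i * τbar j * G k l i j))
            = ∑ k, ∑ l, ∑ i, ∑ j,
                θ 0 * (q i k * (Q k l * τbar j * G k l i j)) := by
              refine Finset.sum_congr rfl fun k _ =>
                Finset.sum_congr rfl fun l _ => ?_
              simp only [Finset.mul_sum]
              refine Finset.sum_congr rfl fun i _ =>
                Finset.sum_congr rfl fun j _ => ?_
              simp only [hqdef]; ring
          _ = ∑ i, ∑ k, ∑ l, ∑ j,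
                θ 0 * (q i k * (Q k l * τbar j * G k l i j)) := sum_comm4' _
          _ = θ 0 * ∑ i, ∑ k, q i k * GQ i k := by
              simp only [hGQ, Finset.mul_sum]
      -- Term 2 : continuation payoff
      have hterm2 : ∑ k, ∑ l, p k * Q k l *
            (∑ i, ∑ j, sk k i * τbar j * ((1 - θ 0) * Bf k l i j))
          = ∑ i, ∑ j, τbar j * ((1 - θ 0) * P i j) := by
        calc ∑ k, ∑ l, p k * Q k l *
              (∑ i, ∑ j, sk k i * τbar j * ((1 - θ 0) * Bf k l i j))
            = ∑ k, ∑ l, ∑ i, ∑ j,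
                τbar j * ((1 - θ 0) * (q i k * Q k l * Bf k l i j)) := by
              refine Finset.sum_congr rfl fun k _ =>
                Finset.sum_congr rfl fun l _ => ?_
              simp only [Finset.mul_sum]
              refine Finset.sum_congr rfl fun i _ =>
                Finset.sum_congr rfl fun j _ => ?_
              simp only [hqdef]; ring
          _ = ∑ i, ∑ j, ∑ k, ∑ l,
                τbar j * ((1 - θ 0) * (q i k * Q k l * Bf k l i j)) :=
              sum_comm4 _
          _ = ∑ i, ∑ j, τbar j * ((1 - θ 0) * P i j) := by
              refine Finset.sum_congr rfl fun i _ =>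
                Finset.sum_congr rfl fun j _ => ?_
              rw [hP i j]
              simp only [Finset.mul_sum]
      -- the ⟨p,x⟩ term spreads over (i,j)
      have hterm3 : ∑ k, p k * x k
          = ∑ i, ∑ j, τbar j * ∑ k, q i k * x k := by
        have h1 : ∀ i, ∑ j, τbar j * ∑ k, q i k * x k = ∑ k, q i k * x k := by
          intro i
          rw [← Finset.sum_mul, hτbar.2, one_mul]
        calc ∑ k, p k * x k
            = ∑ k, ∑ i, q i k * x k := by
              refine Finset.sum_congr rfl fun k _ => ?_
              simp only [hqdef, hsk]
              rw [← Finset.sum_mul, ← Finset.mul_sum, (s.2 k []).2, mul_one]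
          _ = ∑ i, ∑ k, q i k * x k := Finset.sum_comm
          _ = ∑ i, ∑ j, τbar j * ∑ k, q i k * x k :=
              Finset.sum_congr rfl fun i _ => (h1 i).symm
      -- the GQ term spreads over j
      have hterm4 : θ 0 * ∑ i, ∑ k, q i k * GQ i k
          = ∑ i, ∑ j, τbar j * (θ 0 * ∑ k, q i k * GQ i k) := by
        rw [Finset.mul_sum]
        refine Finset.sum_congr rfl fun i _ => ?_
        rw [← Finset.sum_mul, hτbar.2, one_mul]
      calc ∑ k, ∑ l, p k * Q k l *
            (∑' m, θ m * stagePay (s.1 k) (Tstar.1 l) (G k l) m)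
          - ∑ k, p k * x k
          = ∑ k, ∑ l, (p k * Q k l *
              (θ 0 * (∑ i, ∑ j, sk k i * τbar j * G k l i j))
            + p k * Q k l *
              (∑ i, ∑ j, sk k i * τbar j * ((1 - θ 0) * Bf k l i j)))
            - ∑ k, p k * x k := by
            congr 1
            refine Finset.sum_congr rfl fun k _ =>
              Finset.sum_congr rfl fun l _ => ?_
            rw [hkl k l, mul_add]
        _ = (θ 0 * ∑ i, ∑ k, q i k * GQ i k)
            + (∑ i, ∑ j, τbar j * ((1 - θ 0) * P i j))
            - ∑ i, ∑ j, τbar j * ∑ k, q i k * x k := by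
            rw [← hterm3, ← hterm1, ← hterm2]
            congr 1
            rw [← Finset.sum_add_distrib]
            refine Finset.sum_congr rfl fun k _ => ?_
            rw [← Finset.sum_add_distrib]
        _ = ∑ i, ∑ j, τbar j *
              ((1 - θ 0) * (P i j - ∑ k, q i k * X i k)) := by
            rw [hterm4, ← Finset.sum_add_distrib, ← Finset.sum_sub_distrib]
            refine Finset.sum_congr rfl fun i _ => ?_
            rw [← Finset.sum_add_distrib, ← Finset.sum_sub_distrib]
            refine Finset.sum_congr rfl fun j _ => ?_
            have hXk : (1 - θ 0) * (∑ k, q i k * X i k)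
                = ∑ k, q i k * x k - θ 0 * ∑ k, q i k * GQ i k := by
              rw [Finset.mul_sum, Finset.mul_sum, ← Finset.sum_sub_distrib]
              refine Finset.sum_congr rfl fun k _ => ?_
              rw [← mul_assoc, mul_comm (1 - θ 0) (q i k), mul_assoc, hX i k]
              ring
            linear_combination τbar j * hXk
    -- bound each bracket by (∑ₖ q i k) * (W + δ)
    have hbound : ∀ i j, P i j - ∑ k, q i k * X i k
        ≤ (∑ k, q i k) * (W + δ) := by
      intro i j
      rcases eq_or_lt_of_le (Finset.sum_nonneg fun k _ => hq0 i k) with hα | hα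
      · -- total mass zero : everything vanishes
        have hz : ∀ k, q i k = 0 := by
          intro k
          have := (Finset.sum_eq_zero_iff_of_nonneg
            (fun k _ => hq0 i k)).1 hα.symm
          exact this k (Finset.mem_univ k)
        have hP0 : P i j = 0 := by
          rw [hP i j]
          refine Finset.sum_eq_zero fun k _ => Finset.sum_eq_zero fun l _ => by
            rw [hz k]; ring
        have hx0 : ∑ k, q i k * X i k = 0 :=
          Finset.sum_eq_zero fun k _ => by rw [hz k]; ring
        rw [hP0, hx0, ← hα]
        simp
      · -- total mass positive : normalize and compare with the sup
        set α : ℝ := ∑ k, q i k with hαdef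
        have hαne : α ≠ 0 := ne_of_gt hα
        set p' : K → ℝ := fun k => q i k / α with hp'def
        have hp' : p' ∈ stdSimplex ℝ K := by
          constructor
          · exact fun k => div_nonneg (hq0 i k) hα.le
          · simp only [hp'def]
            rw [← Finset.sum_div, div_self hαne]
        have hfac1 : (fun kl : K × L => q i kl.1 * Q kl.1 kl.2)
            = fun kl => α * (p' kl.1 * Q kl.1 kl.2) := by
          funext kl
          simp only [hp'def]
          rw [← mul_assoc, mul_div_cancel₀ _ hαne]
        have hfac2 : ∑ k, q i k * X i k = α * ∑ k, p' k * X i k := by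
          rw [Finset.mul_sum]
          refine Finset.sum_congr rfl fun k _ => ?_
          simp only [hp'def]
          rw [← mul_assoc, mul_div_cancel₀ _ hαne]
        have heq : P i j - ∑ k, q i k * X i k
            = α * hDual θplus G (X i) Q (fun _ => 1) p' (scont i j) (T i) := by
          rw [hPdef]
          simp only []
          rw [hfac1, payA_smul, hfac2]
          unfold hDual
          ring
        have hle : hDual θplus G (X i) Q (fun _ => 1) p' (scont i j) (T i)
            ≤ wPlus θplus G (X i) Q (fun _ => 1) + δ := by
          refine le_trans ?_ (hT i).le
          exact le_ciSup (hBddA (X i) (T i)) ⟨⟨p', hp'⟩, scont i j⟩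
        have hle2 : hDual θplus G (X i) Q (fun _ => 1) p' (scont i j) (T i)
            ≤ W + δ := le_trans hle (add_le_add_left (hWle i) δ)
        rw [heq]
        exact mul_le_mul_of_nonneg_left hle2 hα.le
    -- sum up
    have hsum_alpha : ∑ i, ∑ k, q i k = 1 := by
      rw [Finset.sum_comm]
      have h1 : ∀ k, ∑ i, q i k = p k := by
        intro k
        simp only [hqdef, hsk]
        rw [← Finset.mul_sum, (s.2 k []).2, mul_one]
      rw [Finset.sum_congr rfl fun k _ => h1 k, hp.2]
    calc hDual θ G x Q (fun _ => 1) p s Tstar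
        = ∑ i, ∑ j, τbar j *
            ((1 - θ 0) * (P i j - ∑ k, q i k * X i k)) := hdecomp
      _ ≤ ∑ i, ∑ j, τbar j * ((1 - θ 0) * ((∑ k, q i k) * (W + δ))) := by
          refine Finset.sum_le_sum fun i _ => Finset.sum_le_sum fun j _ => ?_
          refine mul_le_mul_of_nonneg_left ?_ (hτbar.1 j)
          exact mul_le_mul_of_nonneg_left (hbound i j) h1θ.le
      _ = (1 - θ 0) * (W + δ) := by
          have h1 : ∀ i, ∑ j, τbar j * ((1 - θ 0) * ((∑ k, q i k) * (W + δ)))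
              = (1 - θ 0) * ((∑ k, q i k) * (W + δ)) := by
            intro i
            rw [← Finset.sum_mul, hτbar.2, one_mul]
          rw [Finset.sum_congr rfl fun i _ => h1 i]
          have h2 : ∑ i, (1 - θ 0) * ((∑ k, q i k) * (W + δ))
              = (1 - θ 0) * ((∑ i, ∑ k, q i k) * (W + δ)) := by
            rw [Finset.sum_mul, Finset.mul_sum]
          rw [h2, hsum_alpha, one_mul]

  have h1 : wPlus θ G x Q (fun _ => 1) ≤ ⨆ ps : stdSimplex ℝ K × Strat I J K I,
      hDual θ G x Q (fun _ => 1) (ps.1 : K → ℝ) ps.2 Tstar := by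
    refine ciInf_le ?_ Tstar
    refine ⟨-(C + ∑ k, |x k|), ?_⟩
    rintro _ ⟨t, rfl⟩
    refine le_trans ?_ (le_ciSup (hBddA0 t) (Classical.ofNonempty))
    exact (abs_le.1 (abs_hDual_le hθ0 hθ1 G hC' x Q hQ
      (Classical.ofNonempty : stdSimplex ℝ K × Strat I J K I).1.2 _ t)).1
  have h2 : (⨆ ps : stdSimplex ℝ K × Strat I J K I,
      hDual θ G x Q (fun _ => 1) (ps.1 : K → ℝ) ps.2 Tstar)
        ≤ (1 - θ 0) * (W + δ) := ciSup_le key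
  have h3 : (1 - θ 0) * (W + δ) = (1 - θ 0) * W + ε := by
    rw [mul_add, hδdef, mul_div_cancel₀ _ h1θ.ne']
  linarith
end
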